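/- For every graph G without isolated vertices, the polyhedral complex Hom(K_2, G) is homotopy equivalent to the neighborhood complex N(G). -/

import Mathlib

open scoped Topology

/-- A cell of the Lovász `Hom` complex of multihomomorphisms between two graphs,
given by adjacency relations `A` and `B`: a function assigning to each vertex a
nonempty set of vertices such that adjacent vertices get completely adjacent sets. -/
@[ext]
structure HomCell {V W : Type*} (A : V → V → Prop) (B : W → W → Prop) where
  η : V → Set W
  nonempty : ∀ v, (η v).Nonempty
  adj : ∀ ⦃x y⦄, A x y → ∀ a ∈ η x, ∀ b ∈ η y, B a b

namespace HomCell

variable {U V W : Type*} {A : V → V → Prop} {B : W → W → Prop}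

theorem eta_injective : Function.Injective (HomCell.η (A := A) (B := B)) := by
  rintro ⟨f, _, _⟩ ⟨g, _, _⟩ h
  simpa using h

/-- Cells are ordered by pointwise inclusion (the face order of the `Hom` complex). -/
instance : PartialOrder (HomCell A B) := PartialOrder.lift HomCell.η eta_injective

theorem le_def {c d : HomCell A B} : c ≤ d ↔ ∀ v, c.η v ⊆ d.η v := Iff.rfl

noncomputable instance [Finite V] [Finite W] : Fintype (HomCell A B) := by
  classical
  have : Finite (HomCell A B) := Finite.of_injective _ (eta_injective (A := A) (B := B))
  exact Fintype.ofFinite _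

noncomputable instance : DecidableEq (HomCell A B) := Classical.decEq _

/-- Precomposition with a graph homomorphism `φ : (U,A') → (V,A)`: the induced
cellular (monotone) map `Hom(V,W) → Hom(U,W)`; this is the contravariant functoriality
of `Hom(-,H)`. -/
def pull {A' : U → U → Prop} (φ : U → V) (hφ : ∀ ⦃x y⦄, A' x y → A (φ x) (φ y)) :
    HomCell A B →o HomCell A' B where
  toFun c :=
    { η := fun u => c.η (φ u)
      nonempty := fun u => c.nonempty (φ u)
      adj := fun _ _ hxy => c.adj (hφ hxy) }
  monotone' := fun _ _ h u => h (φ u)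

/-- Postcomposition with a graph homomorphism `φ : (V,B) → (W,B')`: the induced
cellular (monotone) map `Hom(U,V) → Hom(U,W)`; this is the covariant functoriality
of `Hom(G,-)`. -/
def push {U₀ V₀ W₀ : Type*} {A₀ : U₀ → U₀ → Prop} {B₀ : V₀ → V₀ → Prop}
    {B₀' : W₀ → W₀ → Prop} (φ : V₀ → W₀)
    (hφ : ∀ ⦃x y⦄, B₀ x y → B₀' (φ x) (φ y)) (c : HomCell A₀ B₀) : HomCell A₀ B₀' where
  η v := φ '' c.η v
  nonempty v := (c.nonempty v).image φ
  adj := by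
    rintro x y hxy a ⟨a', ha', rfl⟩ b ⟨b', hb', rfl⟩
    exact hφ (c.adj hxy a' ha' b' hb')

end HomCell

/-- The geometric realization of the order complex of a preorder `P`:
formal convex combinations supported on finite chains of `P`. -/
def OrderComplex (P : Type*) [Preorder P] : Type _ :=
  { f : P → ℝ // (∀ x, 0 ≤ f x) ∧ HasSum f 1 ∧ IsChain (· ≤ ·) {x | f x ≠ 0} }

instance (P : Type*) [Preorder P] : TopologicalSpace (OrderComplex P) :=
  instTopologicalSpaceSubtype

/-- The topological space underlying the Lovász complex `Hom(G,H)` for graphs given by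
adjacency relations `A`, `B`: the (realization of the) poset of multihomomorphism cells. -/
def HomComplex {V W : Type*} (A : V → V → Prop) (B : W → W → Prop) : Type _ :=
  OrderComplex (HomCell A B)

instance {V W : Type*} (A : V → V → Prop) (B : W → W → Prop) :
    TopologicalSpace (HomComplex A B) := instTopologicalSpaceSubtype

/-- The simplicial map on order complexes induced by a monotone map of posets:
barycentric pushforward of weights. -/
noncomputable def OrderHom.realize {P Q : Type*} [Preorder P] [Preorder Q] [Fintype P]
    [DecidableEq Q] (φ : P →o Q) : C(OrderComplex P, OrderComplex Q) where
  toFun x := by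
    refine ⟨fun q => ∑ p ∈ Finset.univ.filter (fun p => φ p = q), x.1 p, ?_, ?_, ?_⟩
    · intro q
      exact Finset.sum_nonneg fun p _ => x.2.1 p
    · have h1 : ∑ p, x.1 p = 1 := (hasSum_fintype x.1).unique x.2.2.1
      have key : ∀ q ∉ Finset.univ.image φ,
          (∑ p ∈ Finset.univ.filter (fun p => φ p = q), x.1 p) = 0 := by
        intro q hq
        apply Finset.sum_eq_zero
        intro p hp
        simp only [Finset.mem_filter] at hp
        exact absurd (Finset.mem_image.mpr ⟨p, Finset.mem_univ p, hp.2⟩) hq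
      have := hasSum_sum_of_ne_finset_zero (L := SummationFilter.unconditional Q) (s := Finset.univ.image φ)
        (f := fun q => ∑ p ∈ Finset.univ.filter (fun p => φ p = q), x.1 p) key
      have h2 : (∑ q ∈ Finset.univ.image φ,
          ∑ p ∈ Finset.univ.filter (fun p => φ p = q), x.1 p) = ∑ p, x.1 p :=
        Finset.sum_fiberwise_of_maps_to
          (fun p _ => Finset.mem_image_of_mem φ (Finset.mem_univ p)) _
      rwa [h2, h1] at this
    · intro q1 hq1 q2 hq2 hne
      simp only [Set.mem_setOf_eq] at hq1 hq2
      obtain ⟨p1, hp1, hxp1⟩ : ∃ p, φ p = q1 ∧ x.1 p ≠ 0 := by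
        by_contra h
        push_neg at h
        exact hq1 (Finset.sum_eq_zero fun p hp => by
          simp only [Finset.mem_filter] at hp
          exact h p hp.2)
      obtain ⟨p2, hp2, hxp2⟩ : ∃ p, φ p = q2 ∧ x.1 p ≠ 0 := by
        by_contra h
        push_neg at h
        exact hq2 (Finset.sum_eq_zero fun p hp => by
          simp only [Finset.mem_filter] at hp
          exact h p hp.2)
      have hp12 : p1 ≠ p2 := fun h => hne (hp1 ▸ hp2 ▸ h ▸ rfl)
      rcases x.2.2.2 hxp1 hxp2 hp12 with h | h
      · exact Or.inl (hp1 ▸ hp2 ▸ φ.monotone h)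
      · exact Or.inr (hp2 ▸ hp1 ▸ φ.monotone h)
  continuous_toFun := by
    apply Continuous.subtype_mk
    apply continuous_pi
    intro q
    exact continuous_finset_sum _ fun p _ => (continuous_apply p).comp continuous_subtype_val

/-- The geometric realization of the Lovász neighborhood complex `N(G)`:
formal convex combinations of vertices supported on sets with a common neighbor. -/
def NbhdComplex {V : Type*} (G : SimpleGraph V) : Type _ :=
  { f : V → ℝ // (∀ x, 0 ≤ f x) ∧ HasSum f 1 ∧ ∃ v, ∀ w, f w ≠ 0 → G.Adj v w }

instance {V : Type*} (G : SimpleGraph V) : TopologicalSpace (NbhdComplex G) :=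
  instTopologicalSpaceSubtype

section Infra

open Finset ContinuousMap

variable {P Q R : Type*}

namespace OrderComplex

lemma sum_eq_one [Preorder Q] [Fintype Q] (x : OrderComplex Q) : ∑ q, x.1 q = 1 :=
  (hasSum_fintype x.1).unique x.2.2.1

/-- Straight-line homotopy between maps into an order complex whose supports
pointwise unite into chains. -/
theorem homotopic_of_chain [Preorder Q] {X : Type*} [TopologicalSpace X]
    (f g : C(X, OrderComplex Q))
    (h : ∀ x : X, IsChain (· ≤ ·) {q | (f x).1 q ≠ 0 ∨ (g x).1 q ≠ 0}) :
    f.Homotopic g := by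
  refine ⟨⟨⟨fun p => ⟨fun q => (1 - (p.1 : ℝ)) * (f p.2).1 q + (p.1 : ℝ) * (g p.2).1 q,
      ?_, ?_, ?_⟩, ?_⟩, ?_, ?_⟩⟩
  · intro q
    have h0 : (0:ℝ) ≤ (p.1 : ℝ) := p.1.2.1
    have h1 : (p.1 : ℝ) ≤ 1 := p.1.2.2
    have hf := (f p.2).2.1 q
    have hg := (g p.2).2.1 q
    dsimp only
    nlinarith
  · have hf := (f p.2).2.2.1.mul_left (1 - (p.1 : ℝ))
    have hg := (g p.2).2.2.1.mul_left (p.1 : ℝ)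
    have := hf.add hg
    simpa using this
  · refine (h p.2).mono ?_
    intro q hq
    simp only [Set.mem_setOf_eq] at hq ⊢
    by_contra hc
    push_neg at hc
    rw [hc.1, hc.2] at hq
    simp at hq
  · apply Continuous.subtype_mk
    apply continuous_pi
    intro q
    have hf : Continuous fun p : unitInterval × X => (f p.2).1 q :=
      (continuous_apply q).comp (continuous_subtype_val.comp (f.continuous.comp continuous_snd))
    have hg : Continuous fun p : unitInterval × X => (g p.2).1 q :=
      (continuous_apply q).comp (continuous_subtype_val.comp (g.continuous.comp continuous_snd))
    have ht : Continuous fun p : unitInterval × X => (p.1 : ℝ) :=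
      continuous_subtype_val.comp continuous_fst
    exact ((continuous_const.sub ht).mul hf).add (ht.mul hg)
  · intro x
    apply Subtype.ext
    funext q
    simp
  · intro x
    apply Subtype.ext
    funext q
    simp

end OrderComplex

namespace OrderHom

lemma realize_apply [Preorder P] [Preorder Q] [Fintype P] [DecidableEq Q] (φ : P →o Q)
    (x : OrderComplex P) (q : Q) :
    (φ.realize x).1 q = ∑ p ∈ Finset.univ.filter (fun p => φ p = q), x.1 p := rfl

lemma exists_of_realize_ne_zero [Preorder P] [Preorder Q] [Fintype P] [DecidableEq Q]
    (φ : P →o Q) (x : OrderComplex P) {q : Q} (h : (φ.realize x).1 q ≠ 0) :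
    ∃ p, φ p = q ∧ x.1 p ≠ 0 := by
  rw [realize_apply] at h
  obtain ⟨p, hp, hne⟩ := Finset.exists_ne_zero_of_sum_ne_zero h
  exact ⟨p, (Finset.mem_filter.mp hp).2, hne⟩

lemma realize_id [Preorder P] [Fintype P] [DecidableEq P] :
    (OrderHom.id : P →o P).realize = ContinuousMap.id _ := by
  ext x
  apply Subtype.ext
  funext q
  show ∑ p ∈ Finset.univ.filter (fun p => p = q), x.1 p = x.1 q
  rw [Finset.filter_eq']
  simp

lemma realize_comp [Preorder P] [Preorder Q] [Preorder R] [Fintype P] [Fintype Q]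
    [DecidableEq Q] [DecidableEq R] (ψ : Q →o R) (φ : P →o Q) :
    (ψ.comp φ).realize = ψ.realize.comp φ.realize := by
  ext x
  apply Subtype.ext
  funext r
  show ∑ p ∈ Finset.univ.filter (fun p => ψ (φ p) = r), x.1 p
      = ∑ q ∈ Finset.univ.filter (fun q => ψ q = r),
          ∑ p ∈ Finset.univ.filter (fun p => φ p = q), x.1 p
  rw [← Finset.sum_fiberwise_of_maps_to (g := φ) (t := Finset.univ.filter (fun q => ψ q = r))
      (s := Finset.univ.filter (fun p => ψ (φ p) = r)) ?_ x.1]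
  · apply Finset.sum_congr rfl
    intro q hq
    simp only [Finset.mem_filter, Finset.mem_univ, true_and] at hq
    apply Finset.sum_congr ?_ (fun _ _ => rfl)
    ext p
    simp only [Finset.mem_filter, Finset.mem_univ, true_and]
    constructor
    · rintro ⟨_, h2⟩; exact h2
    · intro h; exact ⟨by rw [h, hq], h⟩
  · intro p hp
    simp only [Finset.mem_filter, Finset.mem_univ, true_and] at hp ⊢
    exact hp

/-- Two realizations are homotopic when the maps take comparable values on
comparable inputs. -/
theorem realize_homotopic_of_comp [Preorder P] [PartialOrder Q] [Fintype P] [DecidableEq Q]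
    (φ χ : P →o Q) (hcomp : ∀ p p' : P, (p ≤ p' ∨ p' ≤ p) → (φ p ≤ χ p' ∨ χ p' ≤ φ p)) :
    φ.realize.Homotopic χ.realize := by
  apply OrderComplex.homotopic_of_chain
  intro x
  intro q1 hq1 q2 hq2 hne
  simp only [Set.mem_setOf_eq] at hq1 hq2
  have comp : ∀ p p' : P, x.1 p ≠ 0 → x.1 p' ≠ 0 → (p ≤ p' ∨ p' ≤ p) := by
    intro p p' hp hp'
    rcases eq_or_ne p p' with rfl | hne'
    · exact Or.inl le_rfl
    · rcases x.2.2.2 hp hp' hne' with h | h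
      · exact Or.inl h
      · exact Or.inr h
  rcases hq1 with hq1 | hq1 <;> rcases hq2 with hq2 | hq2
  · obtain ⟨p1, rfl, hp1⟩ := exists_of_realize_ne_zero φ x hq1
    obtain ⟨p2, rfl, hp2⟩ := exists_of_realize_ne_zero φ x hq2
    rcases comp p1 p2 hp1 hp2 with h | h
    · exact Or.inl (φ.monotone h)
    · exact Or.inr (φ.monotone h)
  · obtain ⟨p1, rfl, hp1⟩ := exists_of_realize_ne_zero φ x hq1
    obtain ⟨p2, rfl, hp2⟩ := exists_of_realize_ne_zero χ x hq2
    exact hcomp p1 p2 (comp p1 p2 hp1 hp2)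
  · obtain ⟨p1, rfl, hp1⟩ := exists_of_realize_ne_zero χ x hq1
    obtain ⟨p2, rfl, hp2⟩ := exists_of_realize_ne_zero φ x hq2
    rcases hcomp p2 p1 (comp p2 p1 hp2 hp1) with h | h
    · exact Or.inr h
    · exact Or.inl h
  · obtain ⟨p1, rfl, hp1⟩ := exists_of_realize_ne_zero χ x hq1
    obtain ⟨p2, rfl, hp2⟩ := exists_of_realize_ne_zero χ x hq2
    rcases comp p1 p2 hp1 hp2 with h | h
    · exact Or.inl (χ.monotone h)
    · exact Or.inr (χ.monotone h)

/-- Pointwise comparable monotone maps have homotopic realizations. -/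
theorem realize_homotopic_of_le [PartialOrder P] [PartialOrder Q] [Fintype P] [DecidableEq P]
    [DecidableEq Q] (φ ψ : P →o Q) (hle : ∀ p, φ p ≤ ψ p) :
    φ.realize.Homotopic ψ.realize := by
  classical
  suffices H : ∀ (n : ℕ) (φ : P →o Q), (Finset.univ.filter fun p => φ p ≠ ψ p).card ≤ n →
      (∀ p, φ p ≤ ψ p) → φ.realize.Homotopic ψ.realize from
    H _ φ le_rfl hle
  intro n
  induction n with
  | zero =>
    intro φ hcard _
    have : φ = ψ := by
      apply OrderHom.ext
      funext p
      by_contra hne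
      have : p ∈ Finset.univ.filter fun p => φ p ≠ ψ p := by
        simp [hne]
      have := Finset.card_pos.mpr ⟨p, this⟩
      omega
    rw [this]
  | succ n ih =>
    intro φ hcard hle
    set D := Finset.univ.filter fun p => φ p ≠ ψ p with hD
    by_cases hDne : D.Nonempty
    · obtain ⟨p, hpD, hpmax⟩ : ∃ p ∈ D, ∀ r ∈ D, ¬ p < r := by
        obtain ⟨p, hp⟩ := Finset.exists_maximal hDne
        exact ⟨p, hp.1, fun r hr hlt => hlt.not_ge (hp.2 hr hlt.le)⟩
      have hmemD : ∀ r, r ∈ D ↔ φ r ≠ ψ r := by intro r; simp [hD]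
      have hout : ∀ r, p < r → φ r = ψ r := by
        intro r hr
        by_contra hne
        exact hpmax r ((hmemD r).mpr hne) hr
      have hmono : Monotone (fun r => if r = p then ψ p else φ r) := by
        intro a b hab
        dsimp only
        by_cases ha : a = p <;> by_cases hb : b = p
        · rw [if_pos ha, if_pos hb]
        · rw [if_pos ha, if_neg hb]
          have hpb : p ≤ b := ha ▸ hab
          have : φ b = ψ b := hout b (lt_of_le_of_ne hpb (Ne.symm hb))
          rw [this]
          exact ψ.monotone hpb
        · rw [if_neg ha, if_pos hb]
          exact le_trans (φ.monotone (hb ▸ hab)) (hle p)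
        · rw [if_neg ha, if_neg hb]
          exact φ.monotone hab
      set χ : P →o Q := ⟨fun r => if r = p then ψ p else φ r, hmono⟩ with hχ
      refine Homotopic.trans ?_ (ih χ ?_ ?_)
      · apply realize_homotopic_of_comp
        intro p1 p2 hcmp
        by_cases h2 : p2 = p
        · subst h2
          show φ p1 ≤ χ p2 ∨ χ p2 ≤ φ p1
          have : χ p2 = ψ p2 := by simp [hχ]
          rw [this]
          rcases hcmp with h | h
          · exact Or.inl (le_trans (φ.monotone h) (hle p2))
          · rcases eq_or_lt_of_le h with rfl | hlt
            · exact Or.inl (hle p2)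
            · have heq : φ p1 = ψ p1 := hout p1 hlt
              have : ψ p2 ≤ ψ p1 := ψ.monotone h
              rw [← heq] at this
              exact Or.inr this
        · have : χ p2 = φ p2 := by simp [hχ, h2]
          rw [this]
          rcases hcmp with h | h
          · exact Or.inl (φ.monotone h)
          · exact Or.inr (φ.monotone h)
      · have hfilter : (Finset.univ.filter fun r => χ r ≠ ψ r) = D.erase p := by
          ext r
          simp only [Finset.mem_filter, Finset.mem_univ, true_and, Finset.mem_erase, hmemD]
          constructor
          · intro h
            rcases eq_or_ne r p with rfl | hr
            · exfalso; apply h; simp [hχ]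
            · refine ⟨hr, ?_⟩
              intro hc
              apply h
              simp only [hχ]
              show (if r = p then ψ p else φ r) = ψ r
              rw [if_neg hr, hc]
          · rintro ⟨hr, hc⟩
            show (if r = p then ψ p else φ r) ≠ ψ r
            rw [if_neg hr]
            exact hc
        rw [hfilter]
        have := Finset.card_erase_of_mem hpD
        omega
      · intro r
        show (if r = p then ψ p else φ r) ≤ ψ r
        rcases eq_or_ne r p with rfl | hr
        · simp
        · rw [if_neg hr]; exact hle r
    · have : φ = ψ := by
        apply OrderHom.ext; funext r
        by_contra hne
        exact hDne ⟨r, (by simp [hD, hne])⟩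
      rw [this]

end OrderHom
end Infra

section Retract

open ContinuousMap OrderHom

variable {P Q : Type*}

/-- Homotopy equivalence coming from exactly mutually inverse continuous maps. -/
noncomputable def ContinuousMap.HomotopyEquiv.ofMaps {X Y : Type*} [TopologicalSpace X]
    [TopologicalSpace Y] (f : C(X, Y)) (g : C(Y, X)) (h1 : g.comp f = ContinuousMap.id X)
    (h2 : f.comp g = ContinuousMap.id Y) : ContinuousMap.HomotopyEquiv X Y :=
  ⟨f, g, h1 ▸ ContinuousMap.Homotopic.refl _, h2 ▸ ContinuousMap.Homotopic.refl _⟩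

/-- Order complexes of isomorphic posets are homotopy equivalent. -/
theorem homotopyEquiv_of_orderIso [PartialOrder P] [PartialOrder Q] [Fintype P] [Fintype Q]
    [DecidableEq P] [DecidableEq Q] (e : P ≃o Q) :
    Nonempty (ContinuousMap.HomotopyEquiv (OrderComplex P) (OrderComplex Q)) := by
  set φ : P →o Q := ⟨e, e.monotone⟩ with hφ
  set ψ : Q →o P := ⟨e.symm, e.symm.monotone⟩ with hψ
  have h1 : ψ.comp φ = OrderHom.id := by
    apply OrderHom.ext; funext p; simp [hφ, hψ]
  have h2 : φ.comp ψ = OrderHom.id := by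
    apply OrderHom.ext; funext q; simp [hφ, hψ]
  refine ⟨ContinuousMap.HomotopyEquiv.ofMaps φ.realize ψ.realize ?_ ?_⟩
  · rw [← realize_comp, h1, realize_id]
  · rw [← realize_comp, h2, realize_id]

/-- An increasing idempotent monotone self-map yields a deformation retraction of order
complexes onto the fixed-point subposet. -/
theorem homotopyEquiv_of_closure [PartialOrder Q] [Fintype Q] [DecidableEq Q]
    (c : Q →o Q) (hle : ∀ q, q ≤ c q) (hid : ∀ q, c (c q) = c q) :
    Nonempty (ContinuousMap.HomotopyEquiv (OrderComplex Q)
      (OrderComplex {q : Q // c q = q})) := by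
  classical
  letI : Fintype {q : Q // c q = q} := Fintype.ofFinite _
  set down : Q →o {q : Q // c q = q} := ⟨fun q => ⟨c q, hid q⟩, fun a b h => c.monotone h⟩
  set up : {q : Q // c q = q} →o Q := ⟨Subtype.val, fun a b h => h⟩
  refine ⟨⟨down.realize, up.realize, ?_, ?_⟩⟩
  · have h1 : up.comp down = c := rfl
    rw [← realize_comp, h1, ← realize_id (P := Q)]
    exact (realize_homotopic_of_le OrderHom.id c hle).symm
  · have h2 : down.comp up = OrderHom.id := by
      apply OrderHom.ext; funext q
      exact Subtype.ext q.2
    rw [← realize_comp, h2, realize_id]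

end Retract

section Bary
set_option linter.unusedSectionVars false

open Finset ContinuousMap

variable {α : Type*}

/-- A finite nonempty chain has a greatest element. -/
lemma Finset.chain_exists_top [PartialOrder α] {D : Finset α}
    (hc : IsChain (· ≤ ·) (D : Set α)) (hD : D.Nonempty) : ∃ m ∈ D, ∀ q ∈ D, q ≤ m := by
  obtain ⟨m, hm, hmax⟩ := D.exists_maximal hD
  refine ⟨m, hm, fun q hq => ?_⟩
  rcases eq_or_ne q m with rfl | hne
  · exact le_rfl
  · rcases hc hq hm hne with h | h
    · exact h
    · exact absurd (lt_of_le_of_ne h (Ne.symm hne)) (fun hlt => hlt.not_ge (hmax hq hlt.le))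

/-- A finite nonempty chain has a least element. -/
lemma Finset.chain_exists_bot [PartialOrder α] {D : Finset α}
    (hc : IsChain (· ≤ ·) (D : Set α)) (hD : D.Nonempty) : ∃ m ∈ D, ∀ q ∈ D, m ≤ q := by
  obtain ⟨m, hm, hmin⟩ := D.exists_minimal hD
  refine ⟨m, hm, fun q hq => ?_⟩
  rcases eq_or_ne q m with rfl | hne
  · exact le_rfl
  · rcases hc hq hm hne with h | h
    · exact absurd (lt_of_le_of_ne h hne) (fun hlt => hlt.not_ge (hmin hq hlt.le))
    · exact h

lemma continuous_finset_inf' {X : Type*} [TopologicalSpace X] {s : Finset α}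
    (hs : s.Nonempty) (g : α → X → ℝ) (hg : ∀ a, Continuous (g a)) :
    Continuous fun x => s.inf' hs fun a => g a x := by
  induction hs using Finset.Nonempty.cons_induction with
  | singleton a => simpa using hg a
  | cons a s h hs ih =>
    have : (fun x => (Finset.cons a s h).inf' (Finset.cons_nonempty h) fun b => g b x)
        = fun x => min (g a x) (s.inf' hs fun b => g b x) := by
      funext x
      exact Finset.inf'_cons hs _
    rw [this]
    exact (hg a).min ih

lemma continuous_finset_sup' {X : Type*} [TopologicalSpace X] {s : Finset α}
    (hs : s.Nonempty) (g : α → X → ℝ) (hg : ∀ a, Continuous (g a)) :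
    Continuous fun x => s.sup' hs fun a => g a x := by
  induction hs using Finset.Nonempty.cons_induction with
  | singleton a => simpa using hg a
  | cons a s h hs ih =>
    have : (fun x => (Finset.cons a s h).sup' (Finset.cons_nonempty h) fun b => g b x)
        = fun x => max (g a x) (s.sup' hs fun b => g b x) := by
      funext x
      exact Finset.sup'_cons hs _
    rw [this]
    exact (hg a).max ih

variable {W : Type*} [Fintype W] [DecidableEq W]
variable {Q : Type*} [PartialOrder Q] [Fintype Q]

/-- The barycentric map: spread the weight of `q` uniformly over the vertices `ι q`. -/
noncomputable def baryFun (ι : Q → Finset W) (x : Q → ℝ) (w : W) : ℝ :=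
  ∑ q, x q * (if w ∈ ι q then ((ι q).card : ℝ)⁻¹ else 0)

/-- Minimum of `f` over `ι q`. -/
noncomputable def mnF (ι : Q → Finset W) (hne : ∀ q, (ι q).Nonempty) (q : Q) (f : W → ℝ) : ℝ :=
  (ι q).inf' (hne q) f

/-- Maximum of `f` over the complement of `ι q`, floored at `0`. -/
noncomputable def mxF (ι : Q → Finset W) (q : Q) (f : W → ℝ) : ℝ :=
  if h : (Finset.univ \ ι q).Nonempty then max 0 ((Finset.univ \ ι q).sup' h f) else 0

/-- The inverse of the barycentric map. -/
noncomputable def gamF (ι : Q → Finset W) (hne : ∀ q, (ι q).Nonempty) (f : W → ℝ) (q : Q) : ℝ :=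
  ((ι q).card : ℝ) * max 0 (mnF ι hne q f - mxF ι q f)

variable {ι : Q → Finset W} (hne : ∀ q, (ι q).Nonempty)

lemma mxF_nonneg (q : Q) (f : W → ℝ) : 0 ≤ mxF ι q f := by
  unfold mxF; split_ifs
  · exact le_max_left _ _
  · exact le_rfl

lemma le_mxF (q : Q) (f : W → ℝ) {w : W} (hw : w ∉ ι q) : f w ≤ mxF ι q f := by
  unfold mxF
  have hmem : w ∈ Finset.univ \ ι q := by simp [hw]
  rw [dif_pos ⟨w, hmem⟩]
  exact le_trans (Finset.le_sup' f hmem) (le_max_right _ _)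

lemma mxF_le (q : Q) (f : W → ℝ) {a : ℝ} (ha : 0 ≤ a) (h : ∀ w ∉ ι q, f w ≤ a) :
    mxF ι q f ≤ a := by
  unfold mxF; split_ifs with hcase
  · refine max_le ha (Finset.sup'_le _ _ fun w hw => h w ?_)
    exact (Finset.mem_sdiff.mp hw).2
  · exact ha

lemma mnF_le (q : Q) (f : W → ℝ) {w : W} (hw : w ∈ ι q) : mnF ι hne q f ≤ f w :=
  Finset.inf'_le f hw

lemma le_mnF (q : Q) (f : W → ℝ) {a : ℝ} (h : ∀ w ∈ ι q, a ≤ f w) : a ≤ mnF ι hne q f :=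
  Finset.le_inf' _ f h

lemma mnF_nonneg (q : Q) {f : W → ℝ} (hf : ∀ w, 0 ≤ f w) : 0 ≤ mnF ι hne q f :=
  le_mnF hne q f fun w _ => hf w

lemma mnF_shift (q : Q) {f g : W → ℝ} {v : ℝ} (h : ∀ w ∈ ι q, g w = f w + v) :
    mnF ι hne q g = mnF ι hne q f + v := by
  apply le_antisymm
  · obtain ⟨w0, hw0, heq⟩ := Finset.exists_mem_eq_inf' (hne q) f
    calc mnF ι hne q g ≤ g w0 := mnF_le hne q g hw0
    _ = f w0 + v := h w0 hw0
    _ = mnF ι hne q f + v := by unfold mnF; rw [heq]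
  · apply le_mnF
    intro w hw
    rw [h w hw]
    exact add_le_add_left (mnF_le hne q f hw) v

lemma gamF_nonneg (f : W → ℝ) (q : Q) : 0 ≤ gamF ι hne f q :=
  mul_nonneg (Nat.cast_nonneg _) (le_max_left _ _)

lemma gamF_zero (q : Q) : gamF ι hne (fun _ => (0:ℝ)) q = 0 := by
  unfold gamF
  have h1 : mnF ι hne q (fun _ => (0:ℝ)) = 0 := by
    apply le_antisymm
    · obtain ⟨w, hw⟩ := hne q
      exact mnF_le hne q _ hw
    · exact le_mnF hne q _ fun _ _ => le_rfl
  have h2 : mxF ι q (fun _ => (0:ℝ)) = 0 := by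
    apply le_antisymm
    · exact mxF_le q _ le_rfl fun _ _ => le_rfl
    · exact mxF_nonneg q _
  rw [h1, h2]
  simp

/-- Key decomposition: how `gamF` changes when adding a constant layer on a set `T`
containing the support. -/
lemma gamF_decomp {f' : W → ℝ} (h0 : ∀ w, 0 ≤ f' w) {T : Finset W} (hT : T.Nonempty)
    (hsupp : ∀ w, f' w ≠ 0 → w ∈ T) {v : ℝ} (hv : 0 < v) (q : Q) :
    gamF ι hne (fun w => f' w + if w ∈ T then v else 0) q
      = gamF ι hne f' q + (if ι q = T then ((ι q).card : ℝ) * v else 0) := by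
  set g : W → ℝ := fun w => f' w + if w ∈ T then v else 0 with hg
  have hf'0 : ∀ w ∉ T, f' w = 0 := fun w hw => by
    by_contra hc; exact hw (hsupp w hc)
  have hg0 : ∀ w ∉ T, g w = 0 := fun w hw => by
    simp [hg, hf'0 w hw, if_neg hw]
  by_cases hsub : ι q ⊆ T
  · have hmn : mnF ι hne q g = mnF ι hne q f' + v :=
      mnF_shift hne q fun w hw => by simp [hg, if_pos (hsub hw)]
    by_cases hqT : ι q = T
    · have hmx : mxF ι q g = 0 := le_antisymm
        (mxF_le q g le_rfl fun w hw => le_of_eq (hg0 w (hqT ▸ hw))) (mxF_nonneg q g)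
      have hmx' : mxF ι q f' = 0 := le_antisymm
        (mxF_le q f' le_rfl fun w hw => le_of_eq (hf'0 w (hqT ▸ hw))) (mxF_nonneg q f')
      have hmn0 : 0 ≤ mnF ι hne q f' := mnF_nonneg hne q h0
      unfold gamF
      rw [hmn, hmx, hmx', if_pos hqT]
      rw [max_eq_right (by linarith), max_eq_right (by linarith)]
      ring
    · obtain ⟨w₁, hw₁T, hw₁q⟩ : ∃ w₁, w₁ ∈ T ∧ w₁ ∉ ι q := by
        by_contra hc
        push_neg at hc
        exact hqT (le_antisymm hsub hc)
      have hgw₁ : g w₁ = f' w₁ + v := by simp [hg, if_pos hw₁T]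
      have hmxlow : v ≤ mxF ι q g := by
        calc v ≤ f' w₁ + v := by linarith [h0 w₁]
        _ = g w₁ := hgw₁.symm
        _ ≤ mxF ι q g := le_mxF q g hw₁q
      have hmx : mxF ι q g = mxF ι q f' + v := by
        apply le_antisymm
        · apply mxF_le q g (by linarith [mxF_nonneg (ι := ι) q f'])
          intro w hw
          rcases em (w ∈ T) with hwT | hwT
          · simp only [hg, if_pos hwT]
            exact add_le_add_left (le_mxF q f' hw) v
          · rw [hg0 w hwT]
            linarith [mxF_nonneg (ι := ι) q f', hv]
        · have : mxF ι q f' ≤ mxF ι q g - v := by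
            apply mxF_le q f' (by linarith)
            intro w hw
            rcases em (w ∈ T) with hwT | hwT
            · have : g w = f' w + v := by simp [hg, if_pos hwT]
              linarith [le_mxF (ι := ι) q g hw, this]
            · rw [hf'0 w hwT]; linarith
          linarith
      unfold gamF
      rw [hmn, hmx, if_neg hqT]
      ring_nf
  · obtain ⟨w₁, hw₁q, hw₁T⟩ : ∃ w₁, w₁ ∈ ι q ∧ w₁ ∉ T := by
      by_contra hc
      push_neg at hc
      exact hsub hc
    have h1 : gamF ι hne f' q = 0 := by
      unfold gamF
      have : mnF ι hne q f' ≤ 0 := le_of_le_of_eq (mnF_le hne q f' hw₁q) (hf'0 w₁ hw₁T)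
      rw [max_eq_left (by linarith [mxF_nonneg (ι := ι) q f'])]
      ring
    have h2 : gamF ι hne g q = 0 := by
      unfold gamF
      have : mnF ι hne q g ≤ 0 := le_of_le_of_eq (mnF_le hne q g hw₁q) (hg0 w₁ hw₁T)
      rw [max_eq_left (by linarith [mxF_nonneg (ι := ι) q g])]
      ring
    have hne' : ι q ≠ T := fun hc => hw₁T (hc ▸ hw₁q)
    rw [h2, h1, if_neg hne']
    ring

end Bary

section Bary2
set_option linter.unusedSectionVars false

open Finset ContinuousMap

variable {W : Type*} [Fintype W] [DecidableEq W]
variable {Q : Type*} [PartialOrder Q] [Fintype Q] [DecidableEq Q]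
variable {ι : Q → Finset W} (hne : ∀ q, (ι q).Nonempty)

lemma iota_inj (hle : ∀ q q' : Q, q ≤ q' ↔ ι q ⊆ ι q') (q q' : Q) (h : ι q = ι q') : q = q' :=
  le_antisymm ((hle _ _).mpr (le_of_eq h)) ((hle _ _).mpr (le_of_eq h.symm))

lemma baryFun_nonneg (x : Q → ℝ) (h0 : ∀ q, 0 ≤ x q) (w : W) : 0 ≤ baryFun ι x w := by
  apply Finset.sum_nonneg
  intro q _
  apply mul_nonneg (h0 q)
  split_ifs
  · positivity
  · exact le_rfl

lemma baryFun_zero (x : Q → ℝ) (hx : ∀ q, x q = 0) (w : W) : baryFun ι x w = 0 := by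
  apply Finset.sum_eq_zero
  intro q _
  rw [hx q, zero_mul]

lemma baryFun_supp (x : Q → ℝ) (w : W) (h : baryFun ι x w ≠ 0) :
    ∃ q, x q ≠ 0 ∧ w ∈ ι q := by
  obtain ⟨q, _, hq⟩ := Finset.exists_ne_zero_of_sum_ne_zero h
  refine ⟨q, fun hc => hq (by rw [hc, zero_mul]), ?_⟩
  by_contra hw
  exact hq (by rw [if_neg hw, mul_zero])

lemma baryFun_split (x : Q → ℝ) (qm : Q) (w : W) :
    baryFun ι x w = baryFun ι (fun q => if q = qm then 0 else x q) w
      + (if w ∈ ι qm then x qm * ((ι qm).card : ℝ)⁻¹ else 0) := by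
  unfold baryFun
  have key : ∀ q : Q, x q * (if w ∈ ι q then ((ι q).card : ℝ)⁻¹ else 0)
      = (if q = qm then 0 else x q) * (if w ∈ ι q then ((ι q).card : ℝ)⁻¹ else 0)
        + (if q = qm then (if w ∈ ι qm then x qm * ((ι qm).card : ℝ)⁻¹ else 0) else 0) := by
    intro q
    rcases eq_or_ne q qm with rfl | hq
    · simp
    · rw [if_neg hq, if_neg hq, add_zero]
  rw [Finset.sum_congr rfl fun q _ => key q, Finset.sum_add_distrib,
    Finset.sum_ite_eq' Finset.univ qm _]
  simp

/-- `γ ∘ β = id` on chains. -/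
lemma gamF_baryFun (hle : ∀ q q' : Q, q ≤ q' ↔ ι q ⊆ ι q') : ∀ (n : ℕ) (x : Q → ℝ),
    (Finset.univ.filter fun q => x q ≠ 0).card ≤ n → (∀ q, 0 ≤ x q) →
    IsChain (· ≤ ·) {q | x q ≠ 0} → ∀ q, gamF ι hne (baryFun ι x) q = x q := by
  intro n
  induction n with
  | zero =>
    intro x hcard _ _ q
    have hx : ∀ r, x r = 0 := by
      intro r
      by_contra hr
      have : r ∈ Finset.univ.filter fun q => x q ≠ 0 := by simp [hr]
      have := Finset.card_pos.mpr ⟨r, this⟩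
      omega
    have : baryFun ι x = fun _ => (0:ℝ) := funext fun w => baryFun_zero x hx w
    rw [this, gamF_zero hne q, hx q]
  | succ n ih =>
    intro x hcard h0 hch q
    set D := Finset.univ.filter fun q => x q ≠ 0 with hD
    by_cases hDne : D.Nonempty
    · have hchD : IsChain (· ≤ ·) (D : Set Q) := by
        intro a ha b hb hab
        exact hch (by simpa [hD] using ha) (by simpa [hD] using hb) hab
      obtain ⟨qm, hqmD, hqmtop⟩ := Finset.chain_exists_top hchD hDne
      have hxqm : x qm ≠ 0 := by simpa [hD] using hqmD
      set x' : Q → ℝ := fun q => if q = qm then 0 else x q with hx'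
      have hx'0 : ∀ q, 0 ≤ x' q := by
        intro q
        simp only [hx']
        split_ifs
        · exact le_rfl
        · exact h0 q
      have hx'supp : ∀ q, x' q ≠ 0 → (q ≠ qm ∧ x q ≠ 0) := by
        intro q hq
        by_cases h : q = qm
        · exfalso; apply hq; simp [hx', h]
        · exact ⟨h, by simpa [hx', if_neg h] using hq⟩
      have hch' : IsChain (· ≤ ·) {q | x' q ≠ 0} := by
        refine hch.mono ?_
        intro q hq
        exact (hx'supp q hq).2
      have hcard' : (Finset.univ.filter fun q => x' q ≠ 0).card ≤ n := by
        have hsub : (Finset.univ.filter fun q => x' q ≠ 0) ⊆ D.erase qm := by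
          intro q hq
          simp only [Finset.mem_filter, Finset.mem_univ, true_and] at hq
          obtain ⟨h1, h2⟩ := hx'supp q hq
          simp [hD, Finset.mem_erase, h1, h2]
        have := Finset.card_le_card hsub
        have := Finset.card_erase_of_mem hqmD
        omega
      set v : ℝ := x qm * ((ι qm).card : ℝ)⁻¹ with hv
      have hcardpos : (0:ℝ) < ((ι qm).card : ℝ) := by
        exact_mod_cast Finset.card_pos.mpr (hne qm)
      have hvpos : 0 < v := by
        have : 0 < x qm := lt_of_le_of_ne (h0 qm) (Ne.symm hxqm)
        positivity
      have hfuneq : baryFun ι x = fun w => baryFun ι x' w + if w ∈ ι qm then v else 0 :=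
        funext fun w => baryFun_split x qm w
      have hsupp : ∀ w, baryFun ι x' w ≠ 0 → w ∈ ι qm := by
        intro w hw
        obtain ⟨q₁, hq₁, hwq₁⟩ := baryFun_supp x' w hw
        obtain ⟨hne₁, hx₁⟩ := hx'supp q₁ hq₁
        have : q₁ ∈ D := by simp [hD, hx₁]
        exact (hle q₁ qm).mp (hqmtop q₁ this) hwq₁
      rw [hfuneq, gamF_decomp hne (fun w => baryFun_nonneg x' hx'0 w) (hne qm) hsupp hvpos q,
        ih x' hcard' hx'0 hch' q]
      rcases eq_or_ne q qm with rfl | hq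
      · rw [if_pos rfl]
        simp only [hx', if_pos rfl, zero_add, hv]
        field_simp
      · have hiq : ι q ≠ ι qm := fun hc => hq (iota_inj hle q qm hc)
        simp [hx', hq, hiq]
    · have hx : ∀ r, x r = 0 := by
        intro r
        by_contra hr
        exact hDne ⟨r, by simp [hD, hr]⟩
      have : baryFun ι x = fun _ => (0:ℝ) := funext fun w => baryFun_zero x hx w
      rw [this, gamF_zero hne q, hx q]

/-- Peeling the minimal layer off a nonnegative function. -/
lemma peel (f : W → ℝ) (h0 : ∀ w, 0 ≤ f w)
    (hD : (Finset.univ.filter fun w => f w ≠ 0).Nonempty) :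
    ∃ (f' : W → ℝ) (v : ℝ), 0 < v ∧ (∀ w, 0 ≤ f' w) ∧
      (∀ w, f' w ≠ 0 → w ∈ (Finset.univ.filter fun w => f w ≠ 0)) ∧
      f = (fun w => f' w + if w ∈ (Finset.univ.filter fun w => f w ≠ 0) then v else 0) ∧
      (Finset.univ.filter fun w => f' w ≠ 0).card
        < (Finset.univ.filter fun w => f w ≠ 0).card := by
  set T := Finset.univ.filter fun w => f w ≠ 0 with hT
  set v := T.inf' hD f with hv
  obtain ⟨w₀, hw₀, hw₀eq⟩ := Finset.exists_mem_eq_inf' hD f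
  have hmemT : ∀ w, w ∈ T ↔ f w ≠ 0 := fun w => by simp [hT]
  have hvpos : 0 < v := by
    rw [hv, hw₀eq]
    exact lt_of_le_of_ne (h0 w₀) (Ne.symm ((hmemT w₀).mp hw₀))
  set f' : W → ℝ := fun w => f w - if w ∈ T then v else 0 with hf'
  have hle' : ∀ w ∈ T, v ≤ f w := fun w hw => Finset.inf'_le f hw
  have h0' : ∀ w, 0 ≤ f' w := by
    intro w
    simp only [hf']
    split_ifs with h
    · linarith [hle' w h]
    · simpa using h0 w
  have hsupp' : ∀ w, f' w ≠ 0 → w ∈ T := by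
    intro w hw
    by_contra hc
    apply hw
    have : f w = 0 := by
      by_contra hfc
      exact hc ((hmemT w).mpr hfc)
    simp [hf', if_neg hc, this]
  have hw₀zero : f' w₀ = 0 := by
    simp only [hf', if_pos hw₀]
    rw [hv, hw₀eq]
    ring
  refine ⟨f', v, hvpos, h0', hsupp', ?_, ?_⟩
  · funext w
    simp only [hf']
    ring
  · have hsub2 : (Finset.univ.filter fun w => f' w ≠ 0) ⊆ T := by
      intro w hw
      simp only [Finset.mem_filter, Finset.mem_univ, true_and] at hw
      exact hsupp' w hw
    apply Finset.card_lt_card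
    rw [Finset.ssubset_iff_of_subset hsub2]
    exact ⟨w₀, hw₀, by simp [hw₀zero]⟩
  
/-- `Σ γ = Σ f` and `β ∘ γ = id` by joint induction. -/
lemma gamF_main (hle : ∀ q q' : Q, q ≤ q' ↔ ι q ⊆ ι q') (hdown : ∀ (q : Q) (T : Finset W), T ⊆ ι q → T.Nonempty → ∃ q', ι q' = T) :
    ∀ (n : ℕ) (f : W → ℝ), (Finset.univ.filter fun w => f w ≠ 0).card ≤ n →
    (∀ w, 0 ≤ f w) → (∃ q', ∀ w, f w ≠ 0 → w ∈ ι q') →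
    (∑ q, gamF ι hne f q = ∑ w, f w) ∧ (∀ w, baryFun ι (gamF ι hne f) w = f w) := by
  intro n
  induction n with
  | zero =>
    intro f hcard h0 hex
    have hf : ∀ w, f w = 0 := by
      intro w
      by_contra hw
      have : w ∈ Finset.univ.filter fun w => f w ≠ 0 := by simp [hw]
      have := Finset.card_pos.mpr ⟨w, this⟩
      omega
    have hfz : f = fun _ => (0:ℝ) := funext hf
    constructor
    · rw [hfz]
      simp [gamF_zero hne]
    · intro w
      rw [hfz]
      have : gamF ι hne (fun _ => (0:ℝ)) = fun _ => (0:ℝ) := funext fun q => gamF_zero hne q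
      rw [this]
      exact baryFun_zero _ (fun _ => rfl) w
  | succ n ih =>
    intro f hcard h0 hex
    set T := Finset.univ.filter fun w => f w ≠ 0 with hT
    by_cases hD : T.Nonempty
    · obtain ⟨f', v, hvpos, h0', hsupp', hfeq, hcardlt⟩ := peel f h0 hD
      obtain ⟨q', hq'⟩ := hex
      have hTq' : T ⊆ ι q' := by
        intro w hw
        simp only [hT, Finset.mem_filter, Finset.mem_univ, true_and] at hw
        exact hq' w hw
      obtain ⟨q₀, hq₀⟩ := hdown q' T hTq' hD
      have hsupp'' : ∀ w, f' w ≠ 0 → w ∈ ι q₀ := fun w hw => hq₀ ▸ hsupp' w hw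
      have hex' : ∃ q', ∀ w, f' w ≠ 0 → w ∈ ι q' := ⟨q₀, hsupp''⟩
      have hcard' : (Finset.univ.filter fun w => f' w ≠ 0).card ≤ n := by
        rw [hT] at hcard; omega
      obtain ⟨ihsum, ihbary⟩ := ih f' hcard' h0' hex'
      have hdec : ∀ q, gamF ι hne f q = gamF ι hne f' q
          + (if ι q = T then ((ι q).card : ℝ) * v else 0) := by
        intro q
        conv_lhs => rw [hfeq]
        exact gamF_decomp hne h0' hD hsupp' hvpos q
      have hsingle : ∀ (g : Q → ℝ),
          (∑ q, (if ι q = T then g q else 0)) = g q₀ := by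
        intro g
        rw [Finset.sum_eq_single q₀]
        · rw [if_pos hq₀]
        · intro q _ hq
          rw [if_neg]
          intro hc
          exact hq (iota_inj hle q q₀ (hc.trans hq₀.symm))
        · intro h
          exact absurd (Finset.mem_univ q₀) h
      constructor
      · rw [Finset.sum_congr rfl fun q _ => hdec q, Finset.sum_add_distrib, ihsum]
        have h2 : (∑ q, (if ι q = T then ((ι q).card : ℝ) * v else 0))
            = ((ι q₀).card : ℝ) * v := hsingle _
        rw [h2]
        conv_rhs => rw [hfeq]
        rw [Finset.sum_add_distrib]
        congr 1
        rw [Finset.sum_ite_mem]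
        simp only [Finset.univ_inter, Finset.sum_const, nsmul_eq_mul]
        rw [hq₀]
      · intro w
        have hgam : gamF ι hne f = fun q => gamF ι hne f' q
            + (if ι q = T then ((ι q).card : ℝ) * v else 0) := funext hdec
        rw [hgam]
        unfold baryFun
        rw [Finset.sum_congr rfl (fun q _ => by rw [add_mul]), Finset.sum_add_distrib]
        have hb1 : (∑ q, gamF ι hne f' q * (if w ∈ ι q then ((ι q).card : ℝ)⁻¹ else 0))
            = baryFun ι (gamF ι hne f') w := rfl
        rw [hb1, ihbary w]
        have hterm : ∀ q : Q, (if ι q = T then ((ι q).card : ℝ) * v else 0)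
              * (if w ∈ ι q then ((ι q).card : ℝ)⁻¹ else 0)
            = (if ι q = T then ((ι q).card : ℝ) * v
                * (if w ∈ ι q then ((ι q).card : ℝ)⁻¹ else 0) else 0) := by
          intro q
          rcases em (ι q = T) with h | h
          · rw [if_pos h, if_pos h]
          · rw [if_neg h, if_neg h, zero_mul]
        have hb2 : (∑ q, (if ι q = T then ((ι q).card : ℝ) * v else 0)
              * (if w ∈ ι q then ((ι q).card : ℝ)⁻¹ else 0))
            = (if w ∈ T then v else 0) := by
          have h1 := (Finset.sum_congr rfl (fun q _ => hterm q)).trans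
            (hsingle (fun q => ((ι q).card : ℝ) * v
              * (if w ∈ ι q then ((ι q).card : ℝ)⁻¹ else 0)))
          rw [h1, hq₀]
          have hcardpos : (0:ℝ) < (T.card : ℝ) := by exact_mod_cast Finset.card_pos.mpr hD
          split_ifs with hw
          · rw [mul_right_comm, mul_inv_cancel₀ hcardpos.ne', one_mul]
          · ring
        rw [hb2]
        conv_rhs => rw [hfeq]
    · have hf : ∀ w, f w = 0 := by
        intro w
        by_contra hw
        exact hD ⟨w, by simp [hT, hw]⟩
      have hfz : f = fun _ => (0:ℝ) := funext hf
      constructor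
      · rw [hfz]; simp [gamF_zero hne]
      · intro w
        rw [hfz]
        have : gamF ι hne (fun _ => (0:ℝ)) = fun _ => (0:ℝ) := funext fun q => gamF_zero hne q
        rw [this]
        exact baryFun_zero _ (fun _ => rfl) w

lemma gamF_chain (hle : ∀ q q' : Q, q ≤ q' ↔ ι q ⊆ ι q') (f : W → ℝ) (h0 : ∀ w, 0 ≤ f w) :
    IsChain (· ≤ ·) {q | gamF ι hne f q ≠ 0} := by
  intro q hq q' hq' hner
  simp only [Set.mem_setOf_eq] at hq hq'
  have hpos : ∀ r : Q, gamF ι hne f r ≠ 0 → mxF ι r f < mnF ι hne r f := by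
    intro r hr
    unfold gamF at hr
    by_contra hc
    push_neg at hc
    apply hr
    rw [max_eq_left (by linarith)]
    ring
  have h1 := hpos q hq
  have h2 := hpos q' hq'
  have hsub : ι q ⊆ ι q' ∨ ι q' ⊆ ι q := by
    by_contra hc
    push_neg at hc
    obtain ⟨hc1, hc2⟩ := hc
    obtain ⟨w, hw, hw'⟩ := Finset.not_subset.mp hc1
    obtain ⟨w', hw'2, hw'3⟩ := Finset.not_subset.mp hc2
    have a1 : mnF ι hne q f ≤ f w := mnF_le hne q f hw
    have a2 : f w ≤ mxF ι q' f := le_mxF q' f hw'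
    have a3 : mnF ι hne q' f ≤ f w' := mnF_le hne q' f hw'2
    have a4 : f w' ≤ mxF ι q f := le_mxF q f hw'3
    linarith
  rcases hsub with h | h
  · exact Or.inl ((hle q q').mpr h)
  · exact Or.inr ((hle q' q).mpr h)

/-- The barycentric subdivision homotopy equivalence (in fact a homeomorphism). -/
theorem bary_homotopyEquiv (hne : ∀ q, (ι q).Nonempty)
    (hle : ∀ q q' : Q, q ≤ q' ↔ ι q ⊆ ι q')
    (hdown : ∀ (q : Q) (T : Finset W), T ⊆ ι q → T.Nonempty → ∃ q', ι q' = T)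
    (COND : (W → ℝ) → Prop)
    (hcond : ∀ f : W → ℝ, (∀ w, 0 ≤ f w) → HasSum f 1 →
      (COND f ↔ ∃ q, ∀ w, f w ≠ 0 → w ∈ ι q)) :
    Nonempty (ContinuousMap.HomotopyEquiv (OrderComplex Q)
      {f : W → ℝ // (∀ x, 0 ≤ f x) ∧ HasSum f 1 ∧ COND f}) := by
  have hsum_bary : ∀ x : OrderComplex Q, ∑ w, baryFun ι x.1 w = 1 := by
    intro x
    unfold baryFun
    rw [Finset.sum_comm]
    have : ∀ q : Q, ∑ w, x.1 q * (if w ∈ ι q then ((ι q).card : ℝ)⁻¹ else 0) = x.1 q := by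
      intro q
      rw [← Finset.mul_sum, Finset.sum_ite_mem]
      simp only [Finset.univ_inter, Finset.sum_const, nsmul_eq_mul]
      have : ((ι q).card : ℝ) ≠ 0 := by
        exact_mod_cast Finset.card_pos.mpr (hne q) |>.ne'
      field_simp
    rw [Finset.sum_congr rfl fun q _ => this q]
    exact OrderComplex.sum_eq_one x
  have hBmem : ∀ x : OrderComplex Q, (∀ w, 0 ≤ baryFun ι x.1 w) ∧
      HasSum (baryFun ι x.1) 1 ∧ COND (baryFun ι x.1) := by
    intro x
    have h0 : ∀ w, 0 ≤ baryFun ι x.1 w := baryFun_nonneg x.1 x.2.1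
    have hs : HasSum (baryFun ι x.1) 1 := by
      have := hasSum_fintype (baryFun ι x.1)
      rwa [hsum_bary x] at this
    refine ⟨h0, hs, (hcond _ h0 hs).mpr ?_⟩
    have hDne : (Finset.univ.filter fun q => x.1 q ≠ 0).Nonempty := by
      by_contra hc
      have hall : ∀ q, x.1 q = 0 := by
        intro q; by_contra hq
        exact hc ⟨q, by simp [hq]⟩
      have h1 := OrderComplex.sum_eq_one x
      rw [Finset.sum_congr rfl fun q _ => hall q] at h1
      simp at h1
    have hchD : IsChain (· ≤ ·) ((Finset.univ.filter fun q => x.1 q ≠ 0 : Finset Q) : Set Q) := by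
      intro a ha b hb hab
      exact x.2.2.2 (by simpa using ha) (by simpa using hb) hab
    obtain ⟨qm, hqmD, hqmtop⟩ := Finset.chain_exists_top hchD hDne
    refine ⟨qm, fun w hw => ?_⟩
    obtain ⟨q₁, hq₁, hwq₁⟩ := baryFun_supp x.1 w hw
    exact (hle q₁ qm).mp (hqmtop q₁ (by simp [hq₁])) hwq₁
  have hGmem : ∀ f : {f : W → ℝ // (∀ x, 0 ≤ f x) ∧ HasSum f 1 ∧ COND f},
      (∀ q, 0 ≤ gamF ι hne f.1 q) ∧ HasSum (gamF ι hne f.1) 1 ∧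
        IsChain (· ≤ ·) {q | gamF ι hne f.1 q ≠ 0} := by
    intro f
    have hex : ∃ q, ∀ w, f.1 w ≠ 0 → w ∈ ι q := (hcond f.1 f.2.1 f.2.2.1).mp f.2.2.2
    have hsumf : ∑ w, f.1 w = 1 := (hasSum_fintype f.1).unique f.2.2.1
    have hsum := (gamF_main hne hle hdown _ f.1 le_rfl f.2.1 hex).1
    refine ⟨gamF_nonneg hne f.1, ?_, gamF_chain hne hle f.1 f.2.1⟩
    have := hasSum_fintype (gamF ι hne f.1)
    rwa [hsum, hsumf] at this
  have hBcont : Continuous (fun x : OrderComplex Q =>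
      (⟨baryFun ι x.1, hBmem x⟩ : {f : W → ℝ // (∀ x, 0 ≤ f x) ∧ HasSum f 1 ∧ COND f})) := by
    apply Continuous.subtype_mk
    apply continuous_pi
    intro w
    apply continuous_finset_sum
    intro q _
    exact ((continuous_apply q).comp continuous_subtype_val).mul continuous_const
  have hGcont : Continuous (fun f : {f : W → ℝ // (∀ x, 0 ≤ f x) ∧ HasSum f 1 ∧ COND f} =>
      (⟨gamF ι hne f.1, hGmem f⟩ : OrderComplex Q)) := by
    apply Continuous.subtype_mk
    apply continuous_pi
    intro q
    unfold gamF
    apply Continuous.mul continuous_const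
    apply Continuous.max continuous_const
    apply Continuous.sub
    · unfold mnF
      exact continuous_finset_inf' (hne q) _
        (fun w => (continuous_apply w).comp continuous_subtype_val)
    · unfold mxF
      by_cases hc : (Finset.univ \ ι q).Nonempty
      · simp only [dif_pos hc]
        apply Continuous.max continuous_const
        exact continuous_finset_sup' hc _
          (fun w => (continuous_apply w).comp continuous_subtype_val)
      · simp only [dif_neg hc]
        exact continuous_const
  set B : C(OrderComplex Q, {f : W → ℝ // (∀ x, 0 ≤ f x) ∧ HasSum f 1 ∧ COND f}) :=
    ⟨_, hBcont⟩ with hB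
  set Gm : C({f : W → ℝ // (∀ x, 0 ≤ f x) ∧ HasSum f 1 ∧ COND f}, OrderComplex Q) :=
    ⟨_, hGcont⟩ with hGm
  refine ⟨ContinuousMap.HomotopyEquiv.ofMaps B Gm ?_ ?_⟩
  · apply ContinuousMap.ext
    intro x
    apply Subtype.ext
    funext q
    show gamF ι hne (baryFun ι x.1) q = x.1 q
    exact gamF_baryFun hne hle _ x.1 le_rfl x.2.1 x.2.2.2 q
  · apply ContinuousMap.ext
    intro f
    apply Subtype.ext
    funext w
    show baryFun ι (gamF ι hne f.1) w = f.1 w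
    have hex : ∃ q, ∀ w, f.1 w ≠ 0 → w ∈ ι q := (hcond f.1 f.2.1 f.2.2.1).mp f.2.2.2
    exact (gamF_main hne hle hdown _ f.1 le_rfl f.2.1 hex).2 w

end Bary2

section Mid
set_option linter.unusedSectionVars false

open Finset ContinuousMap

/-- The poset of intervals `[a,b]` of `R`, ordered by `[a,b] ≤ [c,d] ↔ c ≤ a ∧ b ≤ d`
(this is reverse containment of intervals, realized inside `R × Rᵒᵈ`). -/
def IntP (R : Type*) [PartialOrder R] : Type _ :=
  {p : R × Rᵒᵈ // p.1 ≤ OrderDual.ofDual p.2}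

instance IntP.instPartialOrder (R : Type*) [PartialOrder R] : PartialOrder (IntP R) :=
  inferInstanceAs (PartialOrder {p : R × Rᵒᵈ // p.1 ≤ OrderDual.ofDual p.2})

instance IntP.instFinite (R : Type*) [PartialOrder R] [Finite R] : Finite (IntP R) :=
  inferInstanceAs (Finite {p : R × Rᵒᵈ // p.1 ≤ OrderDual.ofDual p.2})

namespace IntP

variable {R : Type*} [PartialOrder R]

/-- Left endpoint. -/
def lo (p : IntP R) : R := p.1.1
/-- Right endpoint. -/
def hi (p : IntP R) : R := OrderDual.ofDual p.1.2

lemma lo_le_hi (p : IntP R) : p.lo ≤ p.hi := p.2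

lemma le_iff {p q : IntP R} : p ≤ q ↔ p.lo ≤ q.lo ∧ q.hi ≤ p.hi := Iff.rfl

@[ext] lemma ext {p q : IntP R} (h1 : p.lo = q.lo) (h2 : p.hi = q.hi) : p = q := by
  apply Subtype.ext
  exact Prod.ext h1 (congrArg OrderDual.toDual h2)

/-- Make an interval. -/
def mk' (a b : R) (h : a ≤ b) : IntP R := ⟨(a, OrderDual.toDual b), h⟩

@[simp] lemma lo_mk' (a b : R) (h : a ≤ b) : (mk' a b h).lo = a := rfl
@[simp] lemma hi_mk' (a b : R) (h : a ≤ b) : (mk' a b h).hi = b := rfl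

end IntP

/-- Core piecewise-linear expression of the folding map. -/
noncomputable def innF (l r ya yb S : ℝ) : ℝ :=
  2 * max 0 (min (min l r) (S / 2) - max (max (l - ya) (r - yb)) 0)

lemma innF_zero_left (l r yb S : ℝ) : innF l r 0 yb S = 0 := by
  unfold innF
  have h1 : min (min l r) (S / 2) ≤ max (max (l - 0) (r - yb)) 0 := by
    calc min (min l r) (S / 2) ≤ min l r := min_le_left _ _
    _ ≤ l := min_le_left _ _
    _ = l - 0 := by ring
    _ ≤ max (max (l - 0) (r - yb)) 0 := le_max_of_le_left (le_max_left _ _)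
  rw [max_eq_left (by linarith)]
  ring

lemma innF_zero_right (l r ya S : ℝ) : innF l r ya 0 S = 0 := by
  unfold innF
  have h1 : min (min l r) (S / 2) ≤ max (max (l - ya) (r - 0)) 0 := by
    calc min (min l r) (S / 2) ≤ min l r := min_le_left _ _
    _ ≤ r := min_le_right _ _
    _ = r - 0 := by ring
    _ ≤ max (max (l - ya) (r - 0)) 0 := le_max_of_le_left (le_max_right _ _)
  rw [max_eq_left (by linarith)]
  ring

lemma innF_nonneg (l r ya yb S : ℝ) : 0 ≤ innF l r ya yb S := by
  unfold innF
  have := le_max_left (0:ℝ) (min (min l r) (S / 2) - max (max (l - ya) (r - yb)) 0)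
  linarith

lemma max3_shift {A B s : ℝ} (hA : 0 ≤ A) (hs : 0 ≤ s) :
    max (max (A + s) (B + s)) 0 = max (max A B) 0 + s := by
  have h1 : max (A + s) (B + s) = max A B + s := (max_add_add_right A B s)
  have h2 : 0 ≤ max A B := le_trans hA (le_max_left _ _)
  rw [h1, max_eq_left (by linarith), max_eq_left h2]

lemma innF_shift {l r ya yb S s : ℝ} (hA : ya ≤ l) (hs : 0 ≤ s) :
    innF (l + s/2) (r + s/2) ya yb (S + s) = innF l r ya yb S := by
  unfold innF
  have h1 : min (l + s/2) (r + s/2) = min l r + s/2 := min_add_add_right _ _ _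
  have h2 : (S + s)/2 = S/2 + s/2 := by ring
  have h3 : min (min l r + s/2) (S/2 + s/2) = min (min l r) (S/2) + s/2 :=
    min_add_add_right _ _ _
  have h4 : l + s/2 - ya = (l - ya) + s/2 := by ring
  have h5 : r + s/2 - yb = (r - yb) + s/2 := by ring
  rw [h1, h2, h3, h4, h5, max3_shift (by linarith) (by linarith)]
  rw [show min (min l r) (S/2) + s/2 - (max (max (l - ya) (r - yb)) 0 + s/2)
    = min (min l r) (S/2) - max (max (l - ya) (r - yb)) 0 by ring]

lemma innF_corner {l r S s : ℝ} (hl : 0 ≤ l) (hr : 0 ≤ r) (hS : 0 ≤ S) (hs : 0 ≤ s) :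
    innF (l + s/2) (r + s/2) (l + s/2) (r + s/2) (S + s) = innF l r l r S + s := by
  have hmin : 0 ≤ min (min l r) (S/2) := le_min (le_min hl hr) (by linarith)
  have hL : innF (l + s/2) (r + s/2) (l + s/2) (r + s/2) (S + s)
      = 2 * (min (min l r) (S/2) + s/2) := by
    unfold innF
    rw [show l + s/2 - (l + s/2) = 0 by ring, show r + s/2 - (r + s/2) = 0 by ring,
      max_self, max_self]
    rw [min_add_add_right, show (S + s)/2 = S/2 + s/2 by ring, min_add_add_right, sub_zero]
    rw [max_eq_right (by linarith)]
  have hR : innF l r l r S = 2 * (min (min l r) (S/2)) := by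
    unfold innF
    rw [sub_self, sub_self, max_self, max_self, sub_zero, max_eq_right hmin]
  rw [hL, hR]; ring

lemma innF_left {l r yb S s : ℝ} (hbr : yb ≤ r) (hs : 0 ≤ s) :
    innF (l + s/2) (r + s/2) (l + s/2) yb (S + s) = innF l r l yb S := by
  have hB : (0:ℝ) ≤ r - yb := by linarith
  have hL : innF (l + s/2) (r + s/2) (l + s/2) yb (S + s)
      = 2 * max 0 (min (min l r) (S/2) - (r - yb)) := by
    unfold innF
    rw [show l + s/2 - (l + s/2) = 0 by ring, show r + s/2 - yb = (r - yb) + s/2 by ring]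
    rw [show (0:ℝ) ⊔ (r - yb + s/2) = r - yb + s/2 from max_eq_right (by linarith),
      show (r - yb + s/2) ⊔ (0:ℝ) = r - yb + s/2 from max_eq_left (by linarith)]
    rw [min_add_add_right, show (S + s)/2 = S/2 + s/2 by ring, min_add_add_right]
    rw [show min (min l r) (S/2) + s/2 - (r - yb + s/2)
      = min (min l r) (S/2) - (r - yb) by ring]
  have hR : innF l r l yb S = 2 * max 0 (min (min l r) (S/2) - (r - yb)) := by
    unfold innF
    rw [sub_self, show (0:ℝ) ⊔ (r - yb) = r - yb from max_eq_right hB,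
      show (r - yb) ⊔ (0:ℝ) = r - yb from max_eq_left hB]
  rw [hL, hR]

lemma innF_right {l r ya S s : ℝ} (hal : ya ≤ l) (hs : 0 ≤ s) :
    innF (l + s/2) (r + s/2) ya (r + s/2) (S + s) = innF l r ya r S := by
  have hA : (0:ℝ) ≤ l - ya := by linarith
  have hL : innF (l + s/2) (r + s/2) ya (r + s/2) (S + s)
      = 2 * max 0 (min (min l r) (S/2) - (l - ya)) := by
    unfold innF
    rw [show r + s/2 - (r + s/2) = 0 by ring, show l + s/2 - ya = (l - ya) + s/2 by ring]
    rw [show (l - ya + s/2) ⊔ (0:ℝ) = l - ya + s/2 from max_eq_left (by linarith),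
      show (l - ya + s/2) ⊔ (0:ℝ) = l - ya + s/2 from max_eq_left (by linarith)]
    rw [min_add_add_right, show (S + s)/2 = S/2 + s/2 by ring, min_add_add_right]
    rw [show min (min l r) (S/2) + s/2 - (l - ya + s/2)
      = min (min l r) (S/2) - (l - ya) by ring]
  have hR : innF l r ya r S = 2 * max 0 (min (min l r) (S/2) - (l - ya)) := by
    unfold innF
    rw [sub_self, show (l - ya) ⊔ (0:ℝ) = l - ya from max_eq_left hA,
      show (l - ya) ⊔ (0:ℝ) = l - ya from max_eq_left hA]
  rw [hL, hR]

lemma innF_diagA {u M s : ℝ} (hu : 0 ≤ u) (huM : u ≤ M) (hs : 0 ≤ s) :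
    innF (u + s/2) (M + s) (u + s/2) (u + s/2) (M + s) = innF u M u u M := by
  have hMu : (0:ℝ) ≤ M - u := by linarith
  have hL : innF (u + s/2) (M + s) (u + s/2) (u + s/2) (M + s)
      = 2 * max 0 (min u (M/2) - (M - u)) := by
    unfold innF
    rw [show u + s/2 - (u + s/2) = 0 by ring,
      show M + s - (u + s/2) = (M - u) + s/2 by ring]
    rw [show (0:ℝ) ⊔ (M - u + s/2) = M - u + s/2 from max_eq_right (by linarith),
      show (M - u + s/2) ⊔ (0:ℝ) = M - u + s/2 from max_eq_left (by linarith)]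
    rw [show (u + s/2) ⊓ (M + s) = u + s/2 from min_eq_left (by linarith),
      show (M + s)/2 = M/2 + s/2 by ring, min_add_add_right]
    rw [show min u (M/2) + s/2 - (M - u + s/2) = min u (M/2) - (M - u) by ring]
  have hR : innF u M u u M = 2 * max 0 (min u (M/2) - (M - u)) := by
    unfold innF
    rw [sub_self, show (0:ℝ) ⊔ (M - u) = M - u from max_eq_right hMu,
      show (M - u) ⊔ (0:ℝ) = M - u from max_eq_left hMu,
      show u ⊓ M = u from min_eq_left huM]
  rw [hL, hR]

lemma innF_diagB {u M s : ℝ} (hu : 0 ≤ u) (huM : u ≤ M) (hs : 0 ≤ s) :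
    innF (M + s) (u + s/2) (u + s/2) (u + s/2) (M + s) = innF M u u u M := by
  have hMu : (0:ℝ) ≤ M - u := by linarith
  have hL : innF (M + s) (u + s/2) (u + s/2) (u + s/2) (M + s)
      = 2 * max 0 (min u (M/2) - (M - u)) := by
    unfold innF
    rw [show u + s/2 - (u + s/2) = 0 by ring,
      show M + s - (u + s/2) = (M - u) + s/2 by ring]
    rw [show (M - u + s/2) ⊔ (0:ℝ) = M - u + s/2 from max_eq_left (by linarith),
      show (M - u + s/2) ⊔ (0:ℝ) = M - u + s/2 from max_eq_left (by linarith)]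
    rw [show (M + s) ⊓ (u + s/2) = u + s/2 from min_eq_right (by linarith),
      show (M + s)/2 = M/2 + s/2 by ring, min_add_add_right]
    rw [show min u (M/2) + s/2 - (M - u + s/2) = min u (M/2) - (M - u) by ring]
  have hR : innF M u u u M = 2 * max 0 (min u (M/2) - (M - u)) := by
    unfold innF
    rw [sub_self, show (M - u) ⊔ (0:ℝ) = M - u from max_eq_left hMu,
      show (M - u) ⊔ (0:ℝ) = M - u from max_eq_left hMu,
      show M ⊓ u = u from min_eq_right huM]
  rw [hL, hR]

lemma innF_pt {u s : ℝ} (hu : 0 ≤ u) (hs : 0 ≤ s) :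
    innF (u + s) (u + s) (u + s) (u + s) (u + s) = innF u u u u u + s := by
  have key : ∀ v : ℝ, 0 ≤ v → innF v v v v v = v := by
    intro v hv
    unfold innF
    rw [sub_self, max_self, max_self, min_self, sub_zero,
      show v ⊓ (v/2) = v/2 from min_eq_right (by linarith),
      show (0:ℝ) ⊔ (v/2) = v/2 from max_eq_right (by linarith)]
    ring
  rw [key _ (by linarith : (0:ℝ) ≤ u + s), key _ hu]

end Mid

section Mid2
set_option linter.unusedSectionVars false

open Finset ContinuousMap
open scoped Classical

noncomputable instance IntP.instFintype (R : Type*) [PartialOrder R] [Finite R] :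
    Fintype (IntP R) := Fintype.ofFinite _

variable {R : Type*} [PartialOrder R] [Fintype R] [DecidableEq R]

/-- The midpoint map on weights. -/
noncomputable def thF (x : IntP R → ℝ) (c : R) : ℝ :=
  ∑ p : IntP R, x p * ((if c = p.lo then (2:ℝ)⁻¹ else 0) + (if c = p.hi then (2:ℝ)⁻¹ else 0))

/-- Cumulative weight below `a`. -/
noncomputable def lF (y : R → ℝ) (a : R) : ℝ := ∑ c ∈ Finset.univ.filter (· ≤ a), y c
/-- Cumulative weight above `b`. -/
noncomputable def rF (y : R → ℝ) (b : R) : ℝ := ∑ c ∈ Finset.univ.filter (b ≤ ·), y c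
/-- Total weight. -/
noncomputable def sumF (y : R → ℝ) : ℝ := ∑ c, y c

/-- The folding map on weights. -/
noncomputable def gmF (y : R → ℝ) (p : IntP R) : ℝ :=
  innF (lF y p.lo) (rF y p.hi) (y p.lo) (y p.hi) (sumF y)

lemma y_le_lF {y : R → ℝ} (h0 : ∀ c, 0 ≤ y c) (a : R) : y a ≤ lF y a :=
  Finset.single_le_sum (fun c _ => h0 c) (by simp)

lemma y_le_rF {y : R → ℝ} (h0 : ∀ c, 0 ≤ y c) (b : R) : y b ≤ rF y b :=
  Finset.single_le_sum (fun c _ => h0 c) (by simp)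

lemma y_le_sumF {y : R → ℝ} (h0 : ∀ c, 0 ≤ y c) (c : R) : y c ≤ sumF y :=
  Finset.single_le_sum (fun c _ => h0 c) (by simp)

lemma lF_nonneg {y : R → ℝ} (h0 : ∀ c, 0 ≤ y c) (a : R) : 0 ≤ lF y a :=
  Finset.sum_nonneg fun c _ => h0 c

lemma rF_nonneg {y : R → ℝ} (h0 : ∀ c, 0 ≤ y c) (b : R) : 0 ≤ rF y b :=
  Finset.sum_nonneg fun c _ => h0 c

lemma sumF_nonneg {y : R → ℝ} (h0 : ∀ c, 0 ≤ y c) : 0 ≤ sumF y :=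
  Finset.sum_nonneg fun c _ => h0 c

lemma gmF_nonneg (y : R → ℝ) (p : IntP R) : 0 ≤ gmF y p := innF_nonneg _ _ _ _ _

lemma gmF_zero_lo {y : R → ℝ} {p : IntP R} (h : y p.lo = 0) : gmF y p = 0 := by
  unfold gmF; rw [h]; exact innF_zero_left _ _ _ _

lemma gmF_zero_hi {y : R → ℝ} {p : IntP R} (h : y p.hi = 0) : gmF y p = 0 := by
  unfold gmF; rw [h]; exact innF_zero_right _ _ _ _

/-- Adding the two half-layers at `a*`, `b*`. -/
noncomputable def ups (y' : R → ℝ) (as bs : R) (s : ℝ) : R → ℝ :=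
  fun c => y' c + (if c = as then s/2 else 0) + (if c = bs then s/2 else 0)

lemma sum_delta (t : Finset R) (a : R) (v : ℝ) :
    (∑ c ∈ t, if c = a then v else 0) = if a ∈ t then v else 0 :=
  Finset.sum_ite_eq' t a (fun _ => v)

lemma sumF_ups (y' : R → ℝ) (as bs : R) (s : ℝ) :
    sumF (ups y' as bs s) = sumF y' + s := by
  unfold sumF ups
  rw [Finset.sum_add_distrib, Finset.sum_add_distrib, sum_delta, sum_delta,
    if_pos (Finset.mem_univ as), if_pos (Finset.mem_univ bs)]
  ring

lemma lF_ups (y' : R → ℝ) (as bs : R) (s : ℝ) (c : R) :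
    lF (ups y' as bs s) c
      = lF y' c + (if as ≤ c then s/2 else 0) + (if bs ≤ c then s/2 else 0) := by
  unfold lF ups
  rw [Finset.sum_add_distrib, Finset.sum_add_distrib, sum_delta, sum_delta]
  by_cases h1 : as ≤ c <;> by_cases h2 : bs ≤ c <;> simp [h1, h2]

lemma rF_ups (y' : R → ℝ) (as bs : R) (s : ℝ) (c : R) :
    rF (ups y' as bs s) c
      = rF y' c + (if c ≤ as then s/2 else 0) + (if c ≤ bs then s/2 else 0) := by
  unfold rF ups
  rw [Finset.sum_add_distrib, Finset.sum_add_distrib, sum_delta, sum_delta]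
  by_cases h1 : c ≤ as <;> by_cases h2 : c ≤ bs <;> simp [h1, h2]

lemma ups_nonneg {y' : R → ℝ} (h0 : ∀ c, 0 ≤ y' c) {s : ℝ} (hs : 0 ≤ s) (as bs : R) :
    ∀ c, 0 ≤ ups y' as bs s c := by
  intro c
  unfold ups
  have := h0 c
  split_ifs <;> linarith

lemma le_ups {y' : R → ℝ} {s : ℝ} (hs : 0 ≤ s) (as bs : R) (c : R) :
    y' c ≤ ups y' as bs s c := by
  unfold ups
  split_ifs <;> linarith

lemma ups_supp {y' : R → ℝ} {s : ℝ} (as bs c : R) (h : ups y' as bs s c ≠ 0) :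
    y' c ≠ 0 ∨ c = as ∨ c = bs := by
  by_contra hc
  push_neg at hc
  apply h
  unfold ups
  rw [hc.1, if_neg hc.2.1, if_neg hc.2.2]
  ring

/-- Collapsing sums for functions supported at a single point. -/
lemma collapse {y : R → ℝ} {a : R} (hsup : ∀ c, y c ≠ 0 → c = a) :
    lF y a = y a ∧ rF y a = y a ∧ sumF y = y a := by
  refine ⟨?_, ?_, ?_⟩
  · unfold lF
    rw [Finset.sum_eq_single a]
    · intro c _ hc
      by_contra h
      exact hc (hsup c h)
    · intro h
      exact absurd (by simp : a ∈ Finset.univ.filter (· ≤ a)) h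
  · unfold rF
    rw [Finset.sum_eq_single a]
    · intro c _ hc
      by_contra h
      exact hc (hsup c h)
    · intro h
      exact absurd (by simp : a ∈ Finset.univ.filter (a ≤ ·)) h
  · unfold sumF
    rw [Finset.sum_eq_single a]
    · intro c _ hc
      by_contra h
      exact hc (hsup c h)
    · intro h
      exact absurd (Finset.mem_univ a) h

/-- Key decomposition for the folding map. -/
lemma gmF_decomp {y' : R → ℝ} (h0 : ∀ c, 0 ≤ y' c) {as bs : R} (hab : as ≤ bs)
    {s : ℝ} (hs : 0 < s) (hlo : ∀ c, y' c ≠ 0 → as ≤ c ∧ c ≤ bs)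
    (hdeg : as = bs → ∀ c, y' c ≠ 0 → c = as) (p : IntP R) :
    gmF (ups y' as bs s) p
      = gmF y' p + (if p.lo = as ∧ p.hi = bs then s else 0) := by
  classical
  set y := ups y' as bs s with hy
  have hy0 : ∀ c, 0 ≤ y c := ups_nonneg h0 hs.le as bs
  have hyy' : ∀ c, y' c ≤ y c := le_ups hs.le as bs
  have hybd : ∀ c, y c ≠ 0 → as ≤ c ∧ c ≤ bs := by
    intro c hc
    rcases ups_supp as bs c hc with h | h | h
    · exact hlo c h
    · subst h; exact ⟨le_rfl, hab⟩
    · subst h; exact ⟨hab, le_rfl⟩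
  have hyas : 0 < y as := by
    have h1 : y as = y' as + s/2 + (if as = bs then s/2 else 0) := by
      rw [hy]; unfold ups
      rw [show (if as = as then s/2 else 0) = s/2 from if_pos rfl]
    rw [h1]
    have := h0 as
    split_ifs <;> linarith
  have hybs : 0 < y bs := by
    have h1 : y bs = y' bs + (if bs = as then s/2 else 0) + s/2 := by
      rw [hy]; unfold ups
      rw [show (if bs = bs then s/2 else 0) = s/2 from if_pos rfl]
    rw [h1]
    have := h0 bs
    split_ifs <;> linarith
  by_cases hza : y p.lo = 0
  · have hza' : y' p.lo = 0 := le_antisymm (hza ▸ hyy' p.lo) (h0 p.lo)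
    rw [gmF_zero_lo hza, gmF_zero_lo hza', if_neg, add_zero]
    rintro ⟨h1, -⟩
    rw [h1] at hza
    exact hyas.ne' hza
  by_cases hzb : y p.hi = 0
  · have hzb' : y' p.hi = 0 := le_antisymm (hzb ▸ hyy' p.hi) (h0 p.hi)
    rw [gmF_zero_hi hzb, gmF_zero_hi hzb', if_neg, add_zero]
    rintro ⟨-, h2⟩
    rw [h2] at hzb
    exact hybs.ne' hzb
  obtain ⟨ha1, ha2⟩ := hybd p.lo hza
  obtain ⟨hb1, hb2⟩ := hybd p.hi hzb
  have hpab : p.lo ≤ p.hi := p.lo_le_hi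
  by_cases hdg : as = bs
  · -- degenerate: everything at the single point `as`.
    have haA : p.lo = as := le_antisymm (hdg ▸ ha2) ha1
    have hbA : p.hi = as := le_antisymm (hdg ▸ hb2) hb1
    have hsup' : ∀ c, y' c ≠ 0 → c = as := hdeg hdg
    have hsup : ∀ c, y c ≠ 0 → c = as := fun c hc =>
      le_antisymm (hdg ▸ (hybd c hc).2) (hybd c hc).1
    obtain ⟨cl, cr, cs⟩ := collapse hsup
    obtain ⟨cl', cr', cs'⟩ := collapse hsup'
    have hyval : y as = y' as + s := by
      rw [hy]; unfold ups
      rw [show (if as = as then s/2 else 0) = s/2 from if_pos rfl,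
        show (if as = bs then s/2 else 0) = s/2 from if_pos hdg]
      ring
    unfold gmF
    rw [haA, hbA, cl, cr, cs, cl', cr', cs', hyval,
      if_pos ⟨rfl, hdg⟩]
    exact innF_pt (h0 as) hs.le
  · -- non-degenerate
    have hablt : as < bs := lt_of_le_of_ne hab hdg
    have k1 : lF y' as = y' as := by
      unfold lF
      rw [Finset.sum_eq_single as]
      · intro c hc hne
        simp only [Finset.mem_filter, Finset.mem_univ, true_and] at hc
        by_contra h
        exact hne (le_antisymm hc ((hlo c h).1))
      · intro h; exact absurd (by simp : as ∈ Finset.univ.filter (· ≤ as)) h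
    have k2 : rF y' bs = y' bs := by
      unfold rF
      rw [Finset.sum_eq_single bs]
      · intro c hc hne
        simp only [Finset.mem_filter, Finset.mem_univ, true_and] at hc
        by_contra h
        exact hne (le_antisymm ((hlo c h).2) hc)
      · intro h; exact absurd (by simp : bs ∈ Finset.univ.filter (bs ≤ ·)) h
    have k3 : lF y' bs = sumF y' := by
      unfold lF sumF
      apply Finset.sum_subset (Finset.filter_subset _ _)
      intro c _ hc
      simp only [Finset.mem_filter, Finset.mem_univ, true_and] at hc
      by_contra h
      exact hc (hlo c h).2
    have k4 : rF y' as = sumF y' := by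
      unfold rF sumF
      apply Finset.sum_subset (Finset.filter_subset _ _)
      intro c _ hc
      simp only [Finset.mem_filter, Finset.mem_univ, true_and] at hc
      by_contra h
      exact hc (hlo c h).1
    have hS : sumF y = sumF y' + s := sumF_ups y' as bs s
    by_cases hAB : p.lo = bs
    · -- p = [bs, bs]
      have hbB : p.hi = bs := le_antisymm hb2 (hAB ▸ hpab)
      have c1 : lF y bs = sumF y' + s := by
        rw [hy, lF_ups,
          show (if as ≤ bs then s/2 else 0) = s/2 from if_pos hab,
          show (if bs ≤ bs then s/2 else 0) = s/2 from if_pos le_rfl, k3]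
        ring
      have c2 : rF y bs = y' bs + s/2 := by
        rw [hy, rF_ups,
          show (if bs ≤ as then s/2 else 0) = 0 from if_neg (fun h => hdg (le_antisymm hab h)),
          show (if bs ≤ bs then s/2 else 0) = s/2 from if_pos le_rfl, k2]
        ring
      have c3 : y bs = y' bs + s/2 := by
        rw [hy]; unfold ups
        rw [show (if bs = as then s/2 else 0) = 0 from if_neg (Ne.symm hdg),
          show (if bs = bs then s/2 else 0) = s/2 from if_pos rfl]
        ring
      unfold gmF
      rw [hAB, hbB, c1, c2, c3, hS, if_neg (fun h => hdg h.1.symm),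
        add_zero, k3, k2]
      exact innF_diagB (h0 bs) (y_le_sumF h0 bs) hs.le
    · by_cases hBA : p.hi = as
      · -- p = [as, as]
        have haA : p.lo = as := le_antisymm (hBA ▸ hpab) ha1
        have c1 : lF y as = y' as + s/2 := by
          rw [hy, lF_ups,
            show (if as ≤ as then s/2 else 0) = s/2 from if_pos le_rfl,
            show (if bs ≤ as then s/2 else 0) = 0 from if_neg (fun h => hdg (le_antisymm hab h)), k1]
          ring
        have c2 : rF y as = sumF y' + s := by
          rw [hy, rF_ups,
            show (if as ≤ as then s/2 else 0) = s/2 from if_pos le_rfl,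
            show (if as ≤ bs then s/2 else 0) = s/2 from if_pos hab, k4]
          ring
        have c3 : y as = y' as + s/2 := by
          rw [hy]; unfold ups
          rw [show (if as = as then s/2 else 0) = s/2 from if_pos rfl,
            show (if as = bs then s/2 else 0) = 0 from if_neg hdg]
          ring
        unfold gmF
        rw [haA, hBA, c1, c2, c3, hS, if_neg (fun h => hdg h.2),
          add_zero, k1, k4]
        exact innF_diagA (h0 as) (y_le_sumF h0 as) hs.le
      · -- generic: p.lo ≠ bs, p.hi ≠ as
        have hla : lF y p.lo = lF y' p.lo + s/2 := by
          rw [hy, lF_ups,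
            show (if as ≤ p.lo then s/2 else 0) = s/2 from if_pos ha1,
            show (if bs ≤ p.lo then s/2 else 0) = 0 from
              if_neg (fun h => hAB (le_antisymm ha2 h))]
          ring
        have hrb : rF y p.hi = rF y' p.hi + s/2 := by
          rw [hy, rF_ups,
            show (if p.hi ≤ as then s/2 else 0) = 0 from
              if_neg (fun h => hBA (le_antisymm h hb1)),
            show (if p.hi ≤ bs then s/2 else 0) = s/2 from if_pos hb2]
          ring
        by_cases haA : p.lo = as <;> by_cases hbB : p.hi = bs
        · -- corner
          have c3 : y p.lo = y' p.lo + s/2 := by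
            rw [hy]; unfold ups
            rw [show (if p.lo = as then s/2 else 0) = s/2 from if_pos haA,
              show (if p.lo = bs then s/2 else 0) = 0 from if_neg hAB]
            ring
          have c4 : y p.hi = y' p.hi + s/2 := by
            rw [hy]; unfold ups
            rw [show (if p.hi = as then s/2 else 0) = 0 from if_neg hBA,
              show (if p.hi = bs then s/2 else 0) = s/2 from if_pos hbB]
            ring
          have e1 : y' p.lo = lF y' p.lo := by rw [haA, k1]
          have e2 : y' p.hi = rF y' p.hi := by rw [hbB, k2]
          unfold gmF
          rw [c3, c4, hla, hrb, hS, if_pos ⟨haA, hbB⟩, e1, e2]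
          exact innF_corner (lF_nonneg h0 p.lo) (rF_nonneg h0 p.hi) (sumF_nonneg h0) hs.le
        · -- left edge
          have c3 : y p.lo = y' p.lo + s/2 := by
            rw [hy]; unfold ups
            rw [show (if p.lo = as then s/2 else 0) = s/2 from if_pos haA,
              show (if p.lo = bs then s/2 else 0) = 0 from if_neg hAB]
            ring
          have c4 : y p.hi = y' p.hi := by
            rw [hy]; unfold ups
            rw [show (if p.hi = as then s/2 else 0) = 0 from if_neg hBA,
              show (if p.hi = bs then s/2 else 0) = 0 from if_neg hbB]
            ring
          have e1 : y' p.lo = lF y' p.lo := by rw [haA, k1]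
          unfold gmF
          rw [c3, c4, hla, hrb, hS, if_neg (fun h => hbB h.2), add_zero, e1]
          exact innF_left (y_le_rF h0 p.hi) hs.le
        · -- right edge
          have c3 : y p.lo = y' p.lo := by
            rw [hy]; unfold ups
            rw [show (if p.lo = as then s/2 else 0) = 0 from if_neg haA,
              show (if p.lo = bs then s/2 else 0) = 0 from if_neg hAB]
            ring
          have c4 : y p.hi = y' p.hi + s/2 := by
            rw [hy]; unfold ups
            rw [show (if p.hi = as then s/2 else 0) = 0 from if_neg hBA,
              show (if p.hi = bs then s/2 else 0) = s/2 from if_pos hbB]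
            ring
          have e2 : y' p.hi = rF y' p.hi := by rw [hbB, k2]
          unfold gmF
          rw [c3, c4, hla, hrb, hS, if_neg (fun h => haA h.1), add_zero, e2]
          exact innF_right (y_le_lF h0 p.lo) hs.le
        · -- interior
          have c3 : y p.lo = y' p.lo := by
            rw [hy]; unfold ups
            rw [show (if p.lo = as then s/2 else 0) = 0 from if_neg haA,
              show (if p.lo = bs then s/2 else 0) = 0 from if_neg hAB]
            ring
          have c4 : y p.hi = y' p.hi := by
            rw [hy]; unfold ups
            rw [show (if p.hi = as then s/2 else 0) = 0 from if_neg hBA,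
              show (if p.hi = bs then s/2 else 0) = 0 from if_neg hbB]
            ring
          unfold gmF
          rw [c3, c4, hla, hrb, hS, if_neg (fun h => haA h.1), add_zero]
          exact innF_shift (y_le_lF h0 p.lo) hs.le

end Mid2

section Mid3
set_option linter.unusedSectionVars false

open Finset ContinuousMap
open scoped Classical

variable {R : Type*} [PartialOrder R] [Fintype R] [DecidableEq R]

lemma thF_nonneg (x : IntP R → ℝ) (h0 : ∀ p, 0 ≤ x p) (c : R) : 0 ≤ thF x c := by
  apply Finset.sum_nonneg
  intro p _
  apply mul_nonneg (h0 p)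
  apply add_nonneg <;> · split_ifs <;> norm_num

lemma thF_zero (x : IntP R → ℝ) (hx : ∀ p, x p = 0) (c : R) : thF x c = 0 := by
  apply Finset.sum_eq_zero
  intro p _
  rw [hx p, zero_mul]

lemma thF_supp (x : IntP R → ℝ) (c : R) (h : thF x c ≠ 0) :
    ∃ p, x p ≠ 0 ∧ (c = p.lo ∨ c = p.hi) := by
  obtain ⟨p, _, hp⟩ := Finset.exists_ne_zero_of_sum_ne_zero h
  refine ⟨p, fun hc => hp (by rw [hc, zero_mul]), ?_⟩
  by_contra hc
  push_neg at hc
  exact hp (by rw [if_neg hc.1, if_neg hc.2]; ring)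

lemma thF_split (x : IntP R → ℝ) (pm : IntP R) (c : R) :
    thF x c = thF (fun p => if p = pm then 0 else x p) c
      + x pm * ((if c = pm.lo then (2:ℝ)⁻¹ else 0) + (if c = pm.hi then (2:ℝ)⁻¹ else 0)) := by
  unfold thF
  have key : ∀ p : IntP R,
      x p * ((if c = p.lo then (2:ℝ)⁻¹ else 0) + (if c = p.hi then (2:ℝ)⁻¹ else 0))
      = (if p = pm then 0 else x p)
          * ((if c = p.lo then (2:ℝ)⁻¹ else 0) + (if c = p.hi then (2:ℝ)⁻¹ else 0))
        + (if p = pm then x pm * ((if c = pm.lo then (2:ℝ)⁻¹ else 0)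
            + (if c = pm.hi then (2:ℝ)⁻¹ else 0)) else 0) := by
    intro p
    rcases eq_or_ne p pm with rfl | hp
    · simp
    · rw [if_neg hp, if_neg hp, add_zero]
  rw [Finset.sum_congr rfl fun p _ => key p, Finset.sum_add_distrib,
    Finset.sum_ite_eq' Finset.univ pm _]
  simp

lemma thF_as_ups (x : IntP R → ℝ) (pm : IntP R) :
    thF x = ups (thF (fun p => if p = pm then 0 else x p)) pm.lo pm.hi (x pm) := by
  funext c
  rw [show ups (thF (fun p => if p = pm then 0 else x p)) pm.lo pm.hi (x pm) c
    = thF (fun p => if p = pm then 0 else x p) c + (if c = pm.lo then x pm/2 else 0)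
      + (if c = pm.hi then x pm/2 else 0) from rfl]
  rw [thF_split x pm c]
  split_ifs <;> ring

lemma sum_thF (x : IntP R → ℝ) : ∑ c, thF x c = ∑ p, x p := by
  unfold thF
  rw [Finset.sum_comm]
  apply Finset.sum_congr rfl
  intro p _
  rw [← Finset.mul_sum, Finset.sum_add_distrib, sum_delta, sum_delta,
    if_pos (Finset.mem_univ _), if_pos (Finset.mem_univ _)]
  norm_num

lemma endpoints_cmp {p p' : IntP R} (h : p ≤ p') {c c' : R}
    (hc : c = p.lo ∨ c = p.hi) (hc' : c' = p'.lo ∨ c' = p'.hi) : c ≤ c' ∨ c' ≤ c := by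
  obtain ⟨h1, h2⟩ := IntP.le_iff.mp h
  rcases hc with rfl | rfl <;> rcases hc' with rfl | rfl
  · exact Or.inl h1
  · exact Or.inl (le_trans h1 p'.lo_le_hi)
  · exact Or.inr (le_trans p'.lo_le_hi h2)
  · exact Or.inr h2

lemma thF_chain (x : IntP R → ℝ) (hch : IsChain (· ≤ ·) {p | x p ≠ 0}) :
    IsChain (· ≤ ·) {c | thF x c ≠ 0} := by
  intro c hc c' hc' hne
  obtain ⟨p, hp, hcp⟩ := thF_supp x c hc
  obtain ⟨p', hp', hcp'⟩ := thF_supp x c' hc'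
  have hcmp : p ≤ p' ∨ p' ≤ p := by
    rcases eq_or_ne p p' with rfl | hpp
    · exact Or.inl le_rfl
    · exact hch hp hp' hpp
  rcases hcmp with h | h
  · exact endpoints_cmp h hcp hcp'
  · exact (endpoints_cmp h hcp' hcp).symm

/-- `Γ ∘ Θ = id`. -/
lemma gmF_thF : ∀ (n : ℕ) (x : IntP R → ℝ),
    (Finset.univ.filter fun p => x p ≠ 0).card ≤ n → (∀ p, 0 ≤ x p) →
    IsChain (· ≤ ·) {p | x p ≠ 0} → ∀ p, gmF (thF x) p = x p := by
  intro n
  induction n with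
  | zero =>
    intro x hcard _ _ p
    have hx : ∀ r, x r = 0 := by
      intro r
      by_contra hr
      have : r ∈ Finset.univ.filter fun p => x p ≠ 0 := by simp [hr]
      have := Finset.card_pos.mpr ⟨r, this⟩
      omega
    rw [gmF_zero_lo (thF_zero x hx p.lo), hx p]
  | succ n ih =>
    intro x hcard h0 hch p
    set D := Finset.univ.filter fun p => x p ≠ 0 with hD
    by_cases hDne : D.Nonempty
    · have hchD : IsChain (· ≤ ·) (D : Set (IntP R)) := by
        intro a ha b hb hab
        exact hch (by simpa [hD] using ha) (by simpa [hD] using hb) hab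
      obtain ⟨pm, hpmD, hpmbot⟩ := Finset.chain_exists_bot hchD hDne
      have hxpm : x pm ≠ 0 := by simpa [hD] using hpmD
      have hs : 0 < x pm := lt_of_le_of_ne (h0 pm) (Ne.symm hxpm)
      set x' : IntP R → ℝ := fun p => if p = pm then 0 else x p with hx'
      have hx'0 : ∀ p, 0 ≤ x' p := by
        intro p
        simp only [hx']
        split_ifs
        · exact le_rfl
        · exact h0 p
      have hx'supp : ∀ p, x' p ≠ 0 → (p ≠ pm ∧ x p ≠ 0) := by
        intro p hp
        by_cases h : p = pm
        · exfalso; apply hp; simp [hx', h]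
        · exact ⟨h, by simpa [hx', if_neg h] using hp⟩
      have hch' : IsChain (· ≤ ·) {p | x' p ≠ 0} :=
        hch.mono fun p hp => (hx'supp p hp).2
      have hcard' : (Finset.univ.filter fun p => x' p ≠ 0).card ≤ n := by
        have hsub : (Finset.univ.filter fun p => x' p ≠ 0) ⊆ D.erase pm := by
          intro p hp
          simp only [Finset.mem_filter, Finset.mem_univ, true_and] at hp
          obtain ⟨h1, h2⟩ := hx'supp p hp
          simp [hD, Finset.mem_erase, h1, h2]
        have := Finset.card_le_card hsub
        have := Finset.card_erase_of_mem hpmD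
        omega
      have h0' : ∀ c, 0 ≤ thF x' c := thF_nonneg x' hx'0
      have hlo : ∀ c, thF x' c ≠ 0 → pm.lo ≤ c ∧ c ≤ pm.hi := by
        intro c hc
        obtain ⟨q, hq, hcq⟩ := thF_supp x' c hc
        obtain ⟨hq1, hq2⟩ := hx'supp q hq
        have hqD : q ∈ D := by simp [hD, hq2]
        obtain ⟨g1, g2⟩ := IntP.le_iff.mp (hpmbot q hqD)
        rcases hcq with rfl | rfl
        · exact ⟨g1, le_trans q.lo_le_hi g2⟩
        · exact ⟨le_trans g1 q.lo_le_hi, g2⟩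
      have hdeg : pm.lo = pm.hi → ∀ c, thF x' c ≠ 0 → c = pm.lo := by
        intro hd c hc
        obtain ⟨g1, g2⟩ := hlo c hc
        exact le_antisymm (hd ▸ g2) g1
      rw [thF_as_ups x pm, ← hx',
        gmF_decomp h0' pm.lo_le_hi hs hlo hdeg p]
      rcases eq_or_ne p pm with rfl | hne
      · rw [if_pos ⟨rfl, rfl⟩, ih x' hcard' hx'0 hch' p]
        simp [hx']
      · rw [if_neg (fun hc => hne (IntP.ext hc.1 hc.2)), add_zero,
          ih x' hcard' hx'0 hch' p]
        simp [hx', if_neg hne]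
    · have hx : ∀ r, x r = 0 := by
        intro r
        by_contra hr
        exact hDne ⟨r, by simp [hD, hr]⟩
      rw [gmF_zero_lo (thF_zero x hx p.lo), hx p]

lemma sum_cond_eq {as bs : R} (hab : as ≤ bs) (v : ℝ) :
    (∑ p : IntP R, if p.lo = as ∧ p.hi = bs then v else 0) = v := by
  rw [Finset.sum_eq_single (IntP.mk' as bs hab)]
  · rw [if_pos ⟨rfl, rfl⟩]
  · intro p _ hp
    rw [if_neg]
    rintro ⟨h1, h2⟩
    exact hp (IntP.ext h1 h2)
  · intro h; exact absurd (Finset.mem_univ _) h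

/-- Joint induction: `Σ Γ = Σ y` and `Θ ∘ Γ = id`. -/
lemma gmF_main : ∀ (n : ℕ) (y : R → ℝ),
    (Finset.univ.filter fun c => y c ≠ 0).card ≤ n → (∀ c, 0 ≤ y c) →
    IsChain (· ≤ ·) {c | y c ≠ 0} →
    (∑ p : IntP R, gmF y p = sumF y) ∧ (∀ c, thF (gmF y) c = y c) := by
  intro n
  induction n with
  | zero =>
    intro y hcard h0 hch
    have hy : ∀ c, y c = 0 := by
      intro c
      by_contra hc
      have : c ∈ Finset.univ.filter fun c => y c ≠ 0 := by simp [hc]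
      have := Finset.card_pos.mpr ⟨c, this⟩
      omega
    have hgm : ∀ p, gmF y p = 0 := fun p => gmF_zero_lo (hy p.lo)
    constructor
    · rw [Finset.sum_congr rfl fun p _ => hgm p]
      unfold sumF
      rw [Finset.sum_congr rfl fun c _ => hy c]
      simp
    · intro c
      rw [thF_zero _ hgm, hy c]
  | succ n ih =>
    intro y hcard h0 hch
    set D := Finset.univ.filter fun c => y c ≠ 0 with hD
    by_cases hDne : D.Nonempty
    · have hchD : IsChain (· ≤ ·) (D : Set R) := by
        intro a ha b hb hab
        exact hch (by simpa [hD] using ha) (by simpa [hD] using hb) hab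
      obtain ⟨as, hasD, hasbot⟩ := Finset.chain_exists_bot hchD hDne
      obtain ⟨bs, hbsD, hbstop⟩ := Finset.chain_exists_top hchD hDne
      have hab : as ≤ bs := hbstop as hasD
      have hyas : 0 < y as := lt_of_le_of_ne (h0 as) (Ne.symm (by simpa [hD] using hasD))
      have hybs : 0 < y bs := lt_of_le_of_ne (h0 bs) (Ne.symm (by simpa [hD] using hbsD))
      have hymem : ∀ c, y c ≠ 0 → as ≤ c ∧ c ≤ bs := by
        intro c hc
        have : c ∈ D := by simp [hD, hc]
        exact ⟨hasbot c this, hbstop c this⟩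
      -- the amount to peel
      set s : ℝ := if as = bs then y as else 2 * min (y as) (y bs) with hs'
      have hs : 0 < s := by
        rw [hs']
        split_ifs
        · exact hyas
        · have := lt_min hyas hybs
          linarith
      set y' : R → ℝ := fun c =>
        y c - (if c = as then s/2 else 0) - (if c = bs then s/2 else 0) with hy'
      have hyups : y = ups y' as bs s := by
        funext c
        simp only [ups, hy']
        ring
      have h0' : ∀ c, 0 ≤ y' c := by
        intro c
        simp only [hy']
        by_cases hca : c = as <;> by_cases hcb : c = bs
        · rw [if_pos hca, if_pos hcb]
          have : s ≤ y c := by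
            rw [hs', if_pos (hca ▸ hcb ▸ rfl : as = bs), hca]
          linarith
        · rw [if_pos hca, if_neg hcb]
          have : as ≠ bs := fun h => hcb (hca.trans h)
          have : s ≤ 2 * y c := by
            rw [hs', if_neg this, hca]
            have := min_le_left (y as) (y bs)
            linarith
          linarith
        · rw [if_neg hca, if_pos hcb]
          have : as ≠ bs := fun h => hca (hcb.trans h.symm)
          have : s ≤ 2 * y c := by
            rw [hs', if_neg this, hcb]
            have := min_le_right (y as) (y bs)
            linarith
          linarith
        · rw [if_neg hca, if_neg hcb]
          have := h0 c
          linarith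
      have hsupp' : ∀ c, y' c ≠ 0 → y c ≠ 0 := by
        intro c hc
        by_contra h
        apply hc
        have hca : c ≠ as := fun hca => (by rw [← hca] at hyas; rw [h] at hyas; exact lt_irrefl _ hyas)
        have hcb : c ≠ bs := fun hcb => (by rw [← hcb] at hybs; rw [h] at hybs; exact lt_irrefl _ hybs)
        simp only [hy', if_neg hca, if_neg hcb, h]
        ring
      have hch' : IsChain (· ≤ ·) {c | y' c ≠ 0} := hch.mono fun c hc => hsupp' c hc
      have hlo : ∀ c, y' c ≠ 0 → as ≤ c ∧ c ≤ bs := fun c hc => hymem c (hsupp' c hc)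
      have hdeg : as = bs → ∀ c, y' c ≠ 0 → c = as := by
        intro hd c hc
        obtain ⟨g1, g2⟩ := hlo c hc
        exact le_antisymm (hd ▸ g2) g1
      -- strict cardinality decrease
      have hcard' : (Finset.univ.filter fun c => y' c ≠ 0).card ≤ n := by
        have hkill : ∃ w ∈ D, y' w = 0 := by
          by_cases hd : as = bs
          · refine ⟨as, hasD, ?_⟩
            have e : y' as = y as - s/2 - s/2 := by
              simp only [hy', if_true, if_pos hd]
            rw [e, hs', if_pos hd]
            ring
          · rcases le_total (y as) (y bs) with hm | hm
            · refine ⟨as, hasD, ?_⟩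
              have e : y' as = y as - s/2 := by
                simp only [hy', if_true, if_neg hd]
                ring
              rw [e, hs', if_neg hd, min_eq_left hm]
              ring
            · refine ⟨bs, hbsD, ?_⟩
              have e : y' bs = y bs - s/2 := by
                simp only [hy', if_true, if_neg (fun h : bs = as => hd h.symm)]
                ring
              rw [e, hs', if_neg hd, min_eq_right hm]
              ring
        obtain ⟨w, hwD, hw⟩ := hkill
        have hsub : (Finset.univ.filter fun c => y' c ≠ 0) ⊆ D.erase w := by
          intro c hc
          simp only [Finset.mem_filter, Finset.mem_univ, true_and] at hc
          have : c ≠ w := fun h => hc (h ▸ hw)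
          simp [hD, Finset.mem_erase, this, hsupp' c hc]
        have h1 := Finset.card_le_card hsub
        have h2 := Finset.card_erase_of_mem hwD
        have h3 := Finset.card_pos.mpr hDne
        omega
      obtain ⟨ihsum, ihth⟩ := ih y' hcard' h0' hch'
      have hdec : ∀ p, gmF y p = gmF y' p
          + (if p.lo = as ∧ p.hi = bs then s else 0) := by
        intro p
        conv_lhs => rw [hyups]
        exact gmF_decomp h0' hab hs hlo hdeg p
      constructor
      · rw [Finset.sum_congr rfl fun p _ => hdec p, Finset.sum_add_distrib, ihsum,
          sum_cond_eq hab s, hyups, sumF_ups]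
      · intro c
        have hgm : gmF y = fun p => gmF y' p
            + (if p.lo = as ∧ p.hi = bs then s else 0) := funext hdec
        rw [hgm]
        unfold thF
        rw [Finset.sum_congr rfl (fun p _ => by rw [add_mul]), Finset.sum_add_distrib]
        have hb1 : (∑ p : IntP R, gmF y' p * ((if c = p.lo then (2:ℝ)⁻¹ else 0)
            + (if c = p.hi then (2:ℝ)⁻¹ else 0))) = thF (gmF y') c := rfl
        rw [hb1, ihth c]
        have hterm : ∀ p : IntP R, (if p.lo = as ∧ p.hi = bs then s else 0)
              * ((if c = p.lo then (2:ℝ)⁻¹ else 0) + (if c = p.hi then (2:ℝ)⁻¹ else 0))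
            = (if p.lo = as ∧ p.hi = bs then
                s * ((if c = p.lo then (2:ℝ)⁻¹ else 0)
                  + (if c = p.hi then (2:ℝ)⁻¹ else 0)) else 0) := by
          intro p
          split_ifs <;> ring
        have hsum2 : (∑ p : IntP R, (if p.lo = as ∧ p.hi = bs then
              s * ((if c = p.lo then (2:ℝ)⁻¹ else 0)
                + (if c = p.hi then (2:ℝ)⁻¹ else 0)) else 0))
            = s * ((if c = as then (2:ℝ)⁻¹ else 0) + (if c = bs then (2:ℝ)⁻¹ else 0)) := by
          rw [Finset.sum_eq_single (IntP.mk' as bs hab)]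
          · rw [if_pos ⟨rfl, rfl⟩]
            rfl
          · intro p _ hp
            rw [if_neg]
            rintro ⟨h1, h2⟩
            exact hp (IntP.ext h1 h2)
          · intro h; exact absurd (Finset.mem_univ _) h
        rw [Finset.sum_congr rfl fun p _ => hterm p, hsum2]
        conv_rhs => rw [hyups]
        show _ = ups y' as bs s c
        unfold ups
        split_ifs <;> ring
    · have hy : ∀ c, y c = 0 := by
        intro c
        by_contra hc
        exact hDne ⟨c, by simp [hD, hc]⟩
      have hgm : ∀ p, gmF y p = 0 := fun p => gmF_zero_lo (hy p.lo)
      constructor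
      · rw [Finset.sum_congr rfl fun p _ => hgm p]
        unfold sumF
        rw [Finset.sum_congr rfl fun c _ => hy c]
        simp
      · intro c
        rw [thF_zero _ hgm, hy c]

end Mid3

section Mid4
set_option linter.unusedSectionVars false

open Finset ContinuousMap
open scoped Classical

variable {R : Type*} [PartialOrder R] [Fintype R] [DecidableEq R]

lemma lF_step {y : R → ℝ} (h0 : ∀ c, 0 ≤ y c) {a a' : R} (h : a < a') :
    lF y a ≤ lF y a' - y a' := by
  have hmem : a' ∈ Finset.univ.filter (· ≤ a') := by simp
  have hsub : Finset.univ.filter (· ≤ a) ⊆ (Finset.univ.filter (· ≤ a')).erase a' := by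
    intro c hc
    simp only [Finset.mem_filter, Finset.mem_univ, true_and] at hc
    refine Finset.mem_erase.mpr ⟨?_, by simp [le_trans hc h.le]⟩
    rintro rfl
    exact absurd hc h.not_ge
  calc lF y a ≤ ∑ c ∈ (Finset.univ.filter (· ≤ a')).erase a', y c :=
      Finset.sum_le_sum_of_subset_of_nonneg hsub (fun c _ _ => h0 c)
  _ = lF y a' - y a' := by rw [Finset.sum_erase_eq_sub hmem]; rfl

lemma rF_step {y : R → ℝ} (h0 : ∀ c, 0 ≤ y c) {b b' : R} (h : b < b') :
    rF y b' ≤ rF y b - y b := by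
  have hmem : b ∈ Finset.univ.filter (b ≤ ·) := by simp
  have hsub : Finset.univ.filter (b' ≤ ·) ⊆ (Finset.univ.filter (b ≤ ·)).erase b := by
    intro c hc
    simp only [Finset.mem_filter, Finset.mem_univ, true_and] at hc
    refine Finset.mem_erase.mpr ⟨?_, by simp [le_trans h.le hc]⟩
    rintro rfl
    exact absurd hc h.not_ge
  calc rF y b' ≤ ∑ c ∈ (Finset.univ.filter (b ≤ ·)).erase b, y c :=
      Finset.sum_le_sum_of_subset_of_nonneg hsub (fun c _ _ => h0 c)
  _ = rF y b - y b := by rw [Finset.sum_erase_eq_sub hmem]; rfl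

lemma gmF_pos {y : R → ℝ} {p : IntP R} (h : gmF y p ≠ 0) :
    max (max (lF y p.lo - y p.lo) (rF y p.hi - y p.hi)) 0
      < min (min (lF y p.lo) (rF y p.hi)) (sumF y / 2) := by
  unfold gmF innF at h
  by_contra hc
  push_neg at hc
  apply h
  rw [max_eq_left (by linarith)]
  ring

lemma gmF_cross {y : R → ℝ} (h0 : ∀ c, 0 ≤ y c) {p p' : IntP R}
    (hp : gmF y p ≠ 0) (hp' : gmF y p' ≠ 0) (h1 : p.lo < p'.lo) (h2 : p.hi < p'.hi) :
    False := by
  have t1 := gmF_pos hp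
  have t2 := gmF_pos hp'
  have a1 : min (min (lF y p.lo) (rF y p.hi)) (sumF y / 2) ≤ lF y p.lo :=
    le_trans (min_le_left _ _) (min_le_left _ _)
  have a2 : lF y p.lo ≤ lF y p'.lo - y p'.lo := lF_step h0 h1
  have a3 : lF y p'.lo - y p'.lo
      ≤ max (max (lF y p'.lo - y p'.lo) (rF y p'.hi - y p'.hi)) 0 :=
    le_max_of_le_left (le_max_left _ _)
  have b1 : min (min (lF y p'.lo) (rF y p'.hi)) (sumF y / 2) ≤ rF y p'.hi :=
    le_trans (min_le_left _ _) (min_le_right _ _)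
  have b2 : rF y p'.hi ≤ rF y p.hi - y p.hi := rF_step h0 h2
  have b3 : rF y p.hi - y p.hi
      ≤ max (max (lF y p.lo - y p.lo) (rF y p.hi - y p.hi)) 0 :=
    le_max_of_le_left (le_max_right _ _)
  linarith

lemma gmF_chain {y : R → ℝ} (h0 : ∀ c, 0 ≤ y c) (hch : IsChain (· ≤ ·) {c | y c ≠ 0}) :
    IsChain (· ≤ ·) {p | gmF y p ≠ 0} := by
  intro p hp p' hp' hne
  simp only [Set.mem_setOf_eq] at hp hp'
  have hlo : y p.lo ≠ 0 := fun hc => hp (gmF_zero_lo hc)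
  have hlo' : y p'.lo ≠ 0 := fun hc => hp' (gmF_zero_lo hc)
  have hhi : y p.hi ≠ 0 := fun hc => hp (gmF_zero_hi hc)
  have hhi' : y p'.hi ≠ 0 := fun hc => hp' (gmF_zero_hi hc)
  have cmp : ∀ {u v : R}, y u ≠ 0 → y v ≠ 0 → u ≤ v ∨ v ≤ u := by
    intro u v hu hv
    rcases eq_or_ne u v with rfl | huv
    · exact Or.inl le_rfl
    · exact hch hu hv huv
  rcases cmp hlo hlo' with c1 | c1 <;> rcases cmp hhi hhi' with c2 | c2
  · by_cases e1 : p'.lo ≤ p.lo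
    · exact Or.inr (IntP.le_iff.mpr ⟨e1, c2⟩)
    · by_cases e2 : p'.hi ≤ p.hi
      · exact Or.inl (IntP.le_iff.mpr ⟨c1, e2⟩)
      · exact absurd (gmF_cross h0 hp hp'
          (lt_of_le_of_ne c1 (fun h => e1 (le_of_eq h.symm)))
          (lt_of_le_of_ne c2 (fun h => e2 (le_of_eq h.symm)))) not_false
  · exact Or.inl (IntP.le_iff.mpr ⟨c1, c2⟩)
  · exact Or.inr (IntP.le_iff.mpr ⟨c1, c2⟩)
  · by_cases e1 : p.lo ≤ p'.lo
    · exact Or.inl (IntP.le_iff.mpr ⟨e1, c2⟩)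
    · by_cases e2 : p.hi ≤ p'.hi
      · exact Or.inr (IntP.le_iff.mpr ⟨c1, e2⟩)
      · exact absurd (gmF_cross h0 hp' hp
          (lt_of_le_of_ne c1 (fun h => e1 (le_of_eq h.symm)))
          (lt_of_le_of_ne c2 (fun h => e2 (le_of_eq h.symm)))) not_false

/-- The interval ("fold") subdivision: `O(IntP R)` is homotopy equivalent (indeed
homeomorphic) to `O(R)`. -/
theorem mid_homotopyEquiv (R : Type*) [PartialOrder R] [Fintype R] [DecidableEq R] :
    Nonempty (ContinuousMap.HomotopyEquiv (OrderComplex (IntP R)) (OrderComplex R)) := by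
  have hTmem : ∀ x : OrderComplex (IntP R), (∀ c, 0 ≤ thF x.1 c) ∧ HasSum (thF x.1) 1 ∧
      IsChain (· ≤ ·) {c | thF x.1 c ≠ 0} := by
    intro x
    refine ⟨thF_nonneg x.1 x.2.1, ?_, thF_chain x.1 x.2.2.2⟩
    have h1 := hasSum_fintype (thF x.1)
    rwa [sum_thF, OrderComplex.sum_eq_one x] at h1
  have hGmem : ∀ y : OrderComplex R, (∀ p, 0 ≤ gmF y.1 p) ∧ HasSum (gmF y.1) 1 ∧
      IsChain (· ≤ ·) {p | gmF y.1 p ≠ 0} := by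
    intro y
    refine ⟨gmF_nonneg y.1, ?_, gmF_chain y.2.1 y.2.2.2⟩
    have hsum := (gmF_main _ y.1 le_rfl y.2.1 y.2.2.2).1
    have hS : sumF y.1 = 1 := OrderComplex.sum_eq_one y
    have h1 := hasSum_fintype (gmF y.1)
    rwa [hsum, hS] at h1
  have hTcont : Continuous (fun x : OrderComplex (IntP R) =>
      (⟨thF x.1, hTmem x⟩ : OrderComplex R)) := by
    apply Continuous.subtype_mk
    apply continuous_pi
    intro c
    apply continuous_finset_sum
    intro p _
    exact ((continuous_apply p).comp continuous_subtype_val).mul continuous_const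
  have hGcont : Continuous (fun y : OrderComplex R =>
      (⟨gmF y.1, hGmem y⟩ : OrderComplex (IntP R))) := by
    apply Continuous.subtype_mk
    apply continuous_pi
    intro p
    unfold gmF innF
    have hcoord : ∀ c : R, Continuous fun y : OrderComplex R => y.1 c :=
      fun c => (continuous_apply c).comp continuous_subtype_val
    have hlF : ∀ c : R, Continuous fun y : OrderComplex R => lF y.1 c := by
      intro c
      exact continuous_finset_sum _ fun d _ => hcoord d
    have hrF : ∀ c : R, Continuous fun y : OrderComplex R => rF y.1 c := by
      intro c
      exact continuous_finset_sum _ fun d _ => hcoord d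
    have hsF : Continuous fun y : OrderComplex R => sumF y.1 :=
      continuous_finset_sum _ fun d _ => hcoord d
    apply Continuous.mul continuous_const
    apply Continuous.max continuous_const
    apply Continuous.sub
    · exact (((hlF p.lo).min (hrF p.hi)).min (hsF.div_const 2))
    · exact ((((hlF p.lo).sub (hcoord p.lo)).max ((hrF p.hi).sub (hcoord p.hi))).max
        continuous_const)
  set Th : C(OrderComplex (IntP R), OrderComplex R) := ⟨_, hTcont⟩ with hTh
  set Gm : C(OrderComplex R, OrderComplex (IntP R)) := ⟨_, hGcont⟩ with hGm
  refine ⟨ContinuousMap.HomotopyEquiv.ofMaps Th Gm ?_ ?_⟩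
  · apply ContinuousMap.ext
    intro x
    apply Subtype.ext
    funext p
    show gmF (thF x.1) p = x.1 p
    exact gmF_thF _ x.1 le_rfl x.2.1 x.2.2.2 p
  · apply ContinuousMap.ext
    intro y
    apply Subtype.ext
    funext c
    show thF (gmF y.1) c = y.1 c
    exact (gmF_main _ y.1 le_rfl y.2.1 y.2.2.2).2 c

end Mid4

section Graphs
set_option linter.unusedSectionVars false

open Finset ContinuousMap
open scoped Classical

/-- Homotopy equivalence of order complexes from inverse order homs. -/
theorem homotopyEquiv_of_orderHoms {P Q : Type*} [PartialOrder P] [PartialOrder Q]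
    [Fintype P] [Fintype Q] [DecidableEq P] [DecidableEq Q]
    (φ : P →o Q) (ψ : Q →o P) (h1 : ψ.comp φ = OrderHom.id) (h2 : φ.comp ψ = OrderHom.id) :
    Nonempty (ContinuousMap.HomotopyEquiv (OrderComplex P) (OrderComplex Q)) := by
  refine ⟨ContinuousMap.HomotopyEquiv.ofMaps φ.realize ψ.realize ?_ ?_⟩
  · rw [← OrderHom.realize_comp, h1, OrderHom.realize_id]
  · rw [← OrderHom.realize_comp, h2, OrderHom.realize_id]

variable {V : Type*} [Fintype V] (G : SimpleGraph V)

/-- Common neighbors (Finset version). -/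
noncomputable def CN (S : Finset V) : Finset V :=
  Finset.univ.filter (fun v => ∀ w ∈ S, G.Adj v w)

lemma mem_CN {S : Finset V} {v : V} : v ∈ CN G S ↔ ∀ w ∈ S, G.Adj v w := by
  simp [CN]

lemma CN_anti {S T : Finset V} (h : S ⊆ T) : CN G T ⊆ CN G S := fun v hv =>
  (mem_CN G).mpr fun w hw => (mem_CN G).mp hv w (h hw)

lemma subset_CN_CN (S : Finset V) : S ⊆ CN G (CN G S) := fun v hv =>
  (mem_CN G).mpr fun w hw => ((mem_CN G).mp hw v hv).symm

lemma CN_CN_CN (S : Finset V) : CN G (CN G (CN G S)) = CN G S :=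
  le_antisymm (CN_anti G (subset_CN_CN G S)) (subset_CN_CN G (CN G S))

/-- Common neighbors (Set version). -/
def CNs (S : Set V) : Set V := {v | ∀ w ∈ S, G.Adj v w}

lemma mem_CNs {S : Set V} {v : V} : v ∈ CNs G S ↔ ∀ w ∈ S, G.Adj v w := Iff.rfl

lemma subset_CNs_CNs (S : Set V) : S ⊆ CNs G (CNs G S) := fun v hv w hw => (hw v hv).symm

lemma CNs_anti {S T : Set V} (h : S ⊆ T) : CNs G T ⊆ CNs G S := fun v hv w hw => hv w (h hw)

lemma CNs_CNs_CNs (S : Set V) : CNs G (CNs G (CNs G S)) = CNs G S :=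
  le_antisymm (CNs_anti G (subset_CNs_CNs G S)) (subset_CNs_CNs G (CNs G S))

/-- Set to Finset conversion. -/
noncomputable def conv (S : Set V) : Finset V := Finset.univ.filter (· ∈ S)

lemma mem_conv {S : Set V} {v : V} : v ∈ conv S ↔ v ∈ S := by simp [conv]

lemma conv_coe (T : Finset V) : conv (↑T : Set V) = T := by
  ext v; simp [mem_conv]

lemma coe_conv (S : Set V) : ((conv S : Finset V) : Set V) = S := by
  ext v; simp [mem_conv]

lemma CN_conv (S : Set V) : CN G (conv S) = conv (CNs G S) := by
  ext v
  simp [mem_CN, mem_conv, mem_CNs]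

lemma CNs_coe (T : Finset V) : CNs G (↑T : Set V) = ↑(CN G T) := by
  ext v
  simp only [mem_CNs, Finset.mem_coe, mem_CN]

/-- The face poset of the neighborhood complex. -/
abbrev FPoset : Type _ := {S : Finset V // S.Nonempty ∧ (CN G S).Nonempty}

noncomputable instance : Fintype (FPoset G) := Fintype.ofFinite _

lemma FPoset.le_iff {S T : FPoset G} : S ≤ T ↔ S.1 ⊆ T.1 := Iff.rfl

/-- The closure operator on the face poset. -/
noncomputable def cF : FPoset G →o FPoset G where
  toFun S := ⟨CN G (CN G S.1),
    ⟨S.2.1.mono (subset_CN_CN G S.1), by rw [CN_CN_CN]; exact S.2.2⟩⟩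
  monotone' := fun S T h => CN_anti G (CN_anti G h)

lemma cF_le : ∀ S : FPoset G, S ≤ cF G S := fun S => subset_CN_CN G S.1

lemma cF_idem : ∀ S : FPoset G, cF G (cF G S) = cF G S := fun S =>
  Subtype.ext (CN_CN_CN G (CN G S.1))

/-- The fixed-point subposet: closed faces. -/
abbrev FClosed : Type _ := {S : FPoset G // cF G S = S}

lemma FClosed.val_CN_CN (S : FClosed G) : CN G (CN G S.1.1) = S.1.1 :=
  congrArg Subtype.val S.2

/-- The Hom-complex cell poset. -/
abbrev PCell : Type _ := HomCell (⊤ : SimpleGraph (Fin 2)).Adj G.Adj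

lemma PCell.adj01 (c : PCell G) : ∀ a ∈ c.η 0, ∀ b ∈ c.η 1, G.Adj a b :=
  c.adj (by rw [SimpleGraph.top_adj]; decide)

lemma PCell.ext' {c d : PCell G} (h : ∀ i, c.η i = d.η i) : c = d :=
  HomCell.eta_injective (funext h)

lemma CNs_CNs_adj {A B : Set V} (h : ∀ a ∈ A, ∀ b ∈ B, G.Adj a b) :
    ∀ a ∈ CNs G (CNs G A), ∀ b ∈ CNs G (CNs G B), G.Adj a b := by
  intro a ha b hb
  have hBA : B ⊆ CNs G A := fun b' hb' a' ha' => (h a' ha' b' hb').symm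
  have haB : a ∈ CNs G B := CNs_anti G hBA ha
  exact (hb a haB).symm

/-- The closure operator on cells. -/
noncomputable def eCell : PCell G →o PCell G where
  toFun c :=
    { η := fun i => CNs G (CNs G (c.η i))
      nonempty := fun i => (c.nonempty i).mono (subset_CNs_CNs G _)
      adj := fun x y hxy => CNs_CNs_adj G (c.adj hxy) }
  monotone' := fun c d h i => CNs_anti G (CNs_anti G (h i))

lemma eCell_le : ∀ c : PCell G, c ≤ eCell G c := fun c i => subset_CNs_CNs G (c.η i)

lemma eCell_idem : ∀ c : PCell G, eCell G (eCell G c) = eCell G c := fun c =>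
  PCell.ext' G fun i => by
    show CNs G (CNs G (CNs G (CNs G (c.η i)))) = CNs G (CNs G (c.η i))
    rw [CNs_CNs_CNs]

abbrev PClosed : Type _ := {c : PCell G // eCell G c = c}

lemma PClosed.eta_closed (c : PClosed G) (i : Fin 2) :
    CNs G (CNs G (c.1.η i)) = c.1.η i :=
  congrFun (congrArg HomCell.η c.2) i

end Graphs

section Final
set_option linter.unusedSectionVars false

open Finset ContinuousMap
open scoped Classical

variable {V : Type*} [Fintype V] (G : SimpleGraph V)

lemma fwdX_mem (c : PClosed G) :
    (conv (c.1.η 0)).Nonempty ∧ (CN G (conv (c.1.η 0))).Nonempty := by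
  constructor
  · obtain ⟨a, ha⟩ := c.1.nonempty 0
    exact ⟨a, mem_conv.mpr ha⟩
  · obtain ⟨b, hb⟩ := c.1.nonempty 1
    refine ⟨b, (mem_CN G).mpr ?_⟩
    intro w hw
    exact (PCell.adj01 G c.1 w (mem_conv.mp hw) b hb).symm

lemma fwdX_closed (c : PClosed G) :
    CN G (CN G (conv (c.1.η 0))) = conv (c.1.η 0) := by
  rw [CN_conv, CN_conv, PClosed.eta_closed G c 0]

lemma fwdZ_mem (c : PClosed G) :
    (CN G (conv (c.1.η 1))).Nonempty ∧ (CN G (CN G (conv (c.1.η 1)))).Nonempty := by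
  constructor
  · obtain ⟨a, ha⟩ := c.1.nonempty 0
    exact ⟨a, (mem_CN G).mpr fun w hw => PCell.adj01 G c.1 a ha w (mem_conv.mp hw)⟩
  · rw [CN_conv, CN_conv, PClosed.eta_closed G c 1]
    obtain ⟨b, hb⟩ := c.1.nonempty 1
    exact ⟨b, mem_conv.mpr hb⟩

lemma fwdZ_closed (c : PClosed G) :
    CN G (CN G (CN G (conv (c.1.η 1)))) = CN G (conv (c.1.η 1)) := CN_CN_CN G _

lemma fwd_le (c : PClosed G) : conv (c.1.η 0) ⊆ CN G (conv (c.1.η 1)) := by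
  intro a ha
  exact (mem_CN G).mpr fun w hw =>
    PCell.adj01 G c.1 a (mem_conv.mp ha) w (mem_conv.mp hw)

/-- Forward map from closed cells to intervals of closed faces. -/
noncomputable def fwd : PClosed G →o IntP (FClosed G) where
  toFun c := ⟨(⟨⟨conv (c.1.η 0), fwdX_mem G c⟩, Subtype.ext (fwdX_closed G c)⟩,
      OrderDual.toDual ⟨⟨CN G (conv (c.1.η 1)), fwdZ_mem G c⟩,
        Subtype.ext (fwdZ_closed G c)⟩), fwd_le G c⟩
  monotone' := by
    intro c d h
    constructor
    · show conv (c.1.η 0) ⊆ conv (d.1.η 0)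
      intro a ha
      exact mem_conv.mpr (h 0 (mem_conv.mp ha))
    · show CN G (conv (d.1.η 1)) ⊆ CN G (conv (c.1.η 1))
      apply CN_anti
      intro a ha
      exact mem_conv.mpr (h 1 (mem_conv.mp ha))

/-- Backward map. -/
noncomputable def bwdCell (q : IntP (FClosed G)) : PCell G where
  η := ![((q.lo.1.1 : Finset V) : Set V), ((CN G q.hi.1.1 : Finset V) : Set V)]
  nonempty := by
    intro i
    fin_cases i
    · simpa using q.lo.1.2.1
    · simpa using q.hi.1.2.2
  adj := by
    intro x y hxy a ha b hb
    have hne : x ≠ y := hxy.ne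
    have hXZ : (q.lo.1.1 : Finset V) ⊆ q.hi.1.1 := q.2
    fin_cases x <;> fin_cases y
    · exact absurd rfl hne
    · simp only [Matrix.cons_val_zero, Matrix.cons_val_one, Matrix.head_cons,
        Finset.mem_coe] at ha hb
      exact ((mem_CN G).mp hb a (hXZ ha)).symm
    · simp only [Matrix.cons_val_zero, Matrix.cons_val_one, Matrix.head_cons,
        Finset.mem_coe] at ha hb
      exact (mem_CN G).mp ha b (hXZ hb)
    · exact absurd rfl hne

lemma bwdCell_closed (q : IntP (FClosed G)) : eCell G (bwdCell G q) = bwdCell G q := by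
  apply PCell.ext' G
  intro i
  fin_cases i
  · show CNs G (CNs G ((q.lo.1.1 : Finset V) : Set V)) = ((q.lo.1.1 : Finset V) : Set V)
    rw [CNs_coe, CNs_coe, FClosed.val_CN_CN]
  · show CNs G (CNs G ((CN G q.hi.1.1 : Finset V) : Set V))
      = ((CN G q.hi.1.1 : Finset V) : Set V)
    rw [CNs_coe, CNs_coe, CN_CN_CN]

noncomputable def bwd : IntP (FClosed G) →o PClosed G where
  toFun q := ⟨bwdCell G q, bwdCell_closed G q⟩
  monotone' := by
    intro q q' h i
    obtain ⟨h1, h2⟩ := IntP.le_iff.mp h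
    fin_cases i
    · show ((q.lo.1.1 : Finset V) : Set V) ⊆ ((q'.lo.1.1 : Finset V) : Set V)
      exact Finset.coe_subset.mpr h1
    · show ((CN G q.hi.1.1 : Finset V) : Set V) ⊆ ((CN G q'.hi.1.1 : Finset V) : Set V)
      exact Finset.coe_subset.mpr (CN_anti G h2)

lemma bwd_fwd : (bwd G).comp (fwd G) = OrderHom.id := by
  apply OrderHom.ext
  funext c
  apply Subtype.ext
  apply PCell.ext' G
  intro i
  fin_cases i
  · show ((conv (c.1.η 0) : Finset V) : Set V) = c.1.η 0
    exact coe_conv _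
  · show ((CN G (CN G (conv (c.1.η 1))) : Finset V) : Set V) = c.1.η 1
    rw [CN_conv, CN_conv, PClosed.eta_closed G c 1, coe_conv]

lemma fwd_bwd : (fwd G).comp (bwd G) = OrderHom.id := by
  apply OrderHom.ext
  funext q
  apply Subtype.ext
  apply Prod.ext
  · apply Subtype.ext
    apply Subtype.ext
    show conv ((q.lo.1.1 : Finset V) : Set V) = q.lo.1.1
    exact conv_coe _
  · show OrderDual.toDual _ = q.1.2
    apply congrArg
    apply Subtype.ext
    apply Subtype.ext
    show CN G (conv ((CN G q.hi.1.1 : Finset V) : Set V)) = q.hi.1.1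
    rw [conv_coe, FClosed.val_CN_CN]

/-- The barycentric step: the neighborhood complex is homotopy equivalent to the order
complex of its face poset. -/
theorem nbhd_equiv : Nonempty (ContinuousMap.HomotopyEquiv
    (OrderComplex (FPoset G)) (NbhdComplex G)) := by
  classical
  letI : DecidableEq (FPoset G) := Classical.decEq _
  have hne : ∀ q : FPoset G, q.1.Nonempty := fun q => q.2.1
  have hle : ∀ q q' : FPoset G, q ≤ q' ↔ q.1 ⊆ q'.1 := fun q q' => Iff.rfl
  have hdown : ∀ (q : FPoset G) (T : Finset V), T ⊆ q.1 → T.Nonempty →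
      ∃ q' : FPoset G, q'.1 = T := by
    intro q T hT hTne
    exact ⟨⟨T, hTne, (q.2.2).mono (CN_anti G hT)⟩, rfl⟩
  have hcond : ∀ f : V → ℝ, (∀ w, 0 ≤ f w) → HasSum f 1 →
      ((∃ v, ∀ w, f w ≠ 0 → G.Adj v w) ↔ ∃ q : FPoset G, ∀ w, f w ≠ 0 → w ∈ q.1) := by
    intro f h0 hsum
    constructor
    · rintro ⟨v, hv⟩
      have hTne : (Finset.univ.filter fun w => f w ≠ 0).Nonempty := by
        by_contra hc
        have hall : ∀ w, f w = 0 := by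
          intro w
          by_contra hw
          exact hc ⟨w, by simp [hw]⟩
        have h1 : ∑ w, f w = 1 := (hasSum_fintype f).unique hsum
        rw [Finset.sum_congr rfl fun w _ => hall w] at h1
        simp at h1
      refine ⟨⟨Finset.univ.filter fun w => f w ≠ 0, hTne, ⟨v, (mem_CN G).mpr ?_⟩⟩, ?_⟩
      · intro w hw
        simp only [Finset.mem_filter, Finset.mem_univ, true_and] at hw
        exact hv w hw
      · intro w hw
        simp [hw]
    · rintro ⟨q, hq⟩
      obtain ⟨v, hv⟩ := q.2.2
      exact ⟨v, fun w hw => (mem_CN G).mp hv w (hq w hw)⟩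
  exact bary_homotopyEquiv (ι := fun S : FPoset G => S.1) hne hle hdown
    (fun f => ∃ v, ∀ w, f w ≠ 0 → G.Adj v w) hcond

theorem final_assembly : Nonempty (ContinuousMap.HomotopyEquiv
    (HomComplex (⊤ : SimpleGraph (Fin 2)).Adj G.Adj) (NbhdComplex G)) := by
  classical
  letI : DecidableEq (FPoset G) := Classical.decEq _
  letI : Fintype (FClosed G) := Fintype.ofFinite _
  letI : DecidableEq (FClosed G) := Classical.decEq _
  letI : Fintype (PClosed G) := Fintype.ofFinite _
  letI : DecidableEq (PClosed G) := Classical.decEq _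
  letI : Fintype (IntP (FClosed G)) := Fintype.ofFinite _
  letI : DecidableEq (IntP (FClosed G)) := Classical.decEq _
  obtain ⟨E1⟩ := nbhd_equiv G
  obtain ⟨E2⟩ := homotopyEquiv_of_closure (cF G) (cF_le G) (cF_idem G)
  obtain ⟨E3⟩ := homotopyEquiv_of_closure (eCell G) (eCell_le G) (eCell_idem G)
  obtain ⟨E4⟩ := homotopyEquiv_of_orderHoms (fwd G) (bwd G) (bwd_fwd G) (fwd_bwd G)
  obtain ⟨E5⟩ := mid_homotopyEquiv (FClosed G)
  exact ⟨E3.trans (E4.trans (E5.trans (E2.symm.trans E1)))⟩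

end Final


/-- **Lovász/Babson–Kozlov**: for a graph `G` without isolated vertices, the complex
`Hom(K₂,G)` is homotopy equivalent to the neighborhood complex `N(G)`. -/
theorem homK2_homotopyEquiv_nbhdComplex {V : Type*} [Fintype V] (G : SimpleGraph V)
    (hiso : ∀ v : V, ∃ w, G.Adj v w) :
    Nonempty (ContinuousMap.HomotopyEquiv
      (HomComplex (⊤ : SimpleGraph (Fin 2)).Adj G.Adj) (NbhdComplex G)) :=
  final_assembly G
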